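/- arXiv:2109.11438 — 7 statements merged into one kernel-verified Lean document; each statement's English description precedes it below -/
import Mathlib

section
/- For every integer n ≥ 2, there exist nearly disjoint graphs G₁, G₂, G₃, each of chromatic number at most n, such that the chromatic number of G₁ ∪ G₂ ∪ G₃ is at least n + 1. -/
set_option maxHeartbeats 1000000

open Finset

/-- Complete graph on `{0,…,n}` (as a subset of `Fin (2n+1)`) minus the edge `{0,n}`. -/
def GA (n : ℕ) : SimpleGraph (Fin (2*n+1)) :=
  SimpleGraph.fromRel (fun u v => u.val ≤ n ∧ v.val ≤ n ∧ ¬(u.val = 0 ∧ v.val = n) ∧ ¬(u.val = n ∧ v.val = 0))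

def GB (n : ℕ) : SimpleGraph (Fin (2*n+1)) :=
  SimpleGraph.fromRel (fun u v => n ≤ u.val ∧ n ≤ v.val ∧ ¬(u.val = n ∧ v.val = 2*n) ∧ ¬(u.val = 2*n ∧ v.val = n))

def GC (n : ℕ) : SimpleGraph (Fin (2*n+1)) :=
  SimpleGraph.fromRel (fun u v => u.val = 0 ∧ v.val = 2*n)

/-- In `Fin n`, a map on `Fin (n+1)` which separates all pairs except `{0, last}`
must identify `0` and `last`. -/
lemma key (n : ℕ) (hn : 1 ≤ n) (f : Fin (n+1) → Fin n)
    (hf : ∀ i j : Fin (n+1), i ≠ j → ¬(i = 0 ∧ j = Fin.last n) → ¬(i = Fin.last n ∧ j = 0) →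
      f i ≠ f j) :
    f 0 = f (Fin.last n) := by
  by_contra hne
  have h0l : (0 : Fin (n+1)) ≠ Fin.last n := by
    simp [Fin.ext_iff]; omega
  set s : Finset (Fin (n+1)) := Finset.univ \ {0, Fin.last n} with hs
  have hscard : s.card = n - 1 := by
    rw [hs, Finset.card_sdiff_of_subset (Finset.subset_univ _)]
    rw [Finset.card_insert_of_notMem (by simpa using h0l), Finset.card_singleton]
    simp
  have hmem : ∀ i ∈ s, i ≠ 0 ∧ i ≠ Fin.last n := by
    intro i hi
    simp [hs] at hi
    tauto
  have hinj : Set.InjOn f s := by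
    intro i hi j hj hij
    by_contra hne'
    exact hf i j hne' (fun h => (hmem j hj).2 h.2) (fun h => (hmem j hj).1 h.2) hij
  have htcard : (s.image f).card = n - 1 := by
    rw [Finset.card_image_of_injOn hinj, hscard]
  have h0 : f 0 ∉ s.image f := by
    simp only [Finset.mem_image, not_exists]
    rintro i ⟨hi, hfi⟩
    exact hf 0 i (Ne.symm (hmem i hi).1) (fun h => (hmem i hi).2 h.2)
      (fun h => h0l h.1) hfi.symm
  have hl : f (Fin.last n) ∉ s.image f := by
    simp only [Finset.mem_image, not_exists]
    rintro i ⟨hi, hfi⟩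
    exact hf (Fin.last n) i (Ne.symm (hmem i hi).2) (fun h => (hmem i hi).2 h.2)
      (fun h => (hmem i hi).1 h.2) hfi.symm
  have hsub : ({f 0, f (Fin.last n)} : Finset (Fin n)) ⊆ (s.image f)ᶜ := by
    intro a ha
    simp only [Finset.mem_insert, Finset.mem_singleton] at ha
    rcases ha with rfl | rfl
    · simpa using h0
    · simpa using hl
  have hc := Finset.card_le_card hsub
  rw [Finset.card_compl, Finset.card_insert_of_notMem (by simpa using hne),
    Finset.card_singleton, htcard] at hc
  simp at hc
  omega

/-- **Coloring nearly disjoint graphs of bounded chromatic number (lower bound).**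
For every `n ≥ 2` there exist nearly disjoint graphs `G₁, G₂, G₃` (with vertex sets
`S 0, S 1, S 2`), each of chromatic number at most `n`, whose union has chromatic
number at least `n + 1`. -/
theorem chromatic_nearly_disjoint_lower (n : ℕ) (hn : 2 ≤ n) :
    ∃ (V : Type) (_ : DecidableEq V) (G : Fin 3 → SimpleGraph V) (S : Fin 3 → Finset V),
      (∀ i u v, (G i).Adj u v → u ∈ S i ∧ v ∈ S i) ∧
      (∀ i j, i ≠ j → (S i ∩ S j).card ≤ 1) ∧
      (∀ i, (G i).chromaticNumber ≤ (n : ℕ∞)) ∧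
      ((n + 1 : ℕ) : ℕ∞) ≤ (⨆ i, G i).chromaticNumber := by
  classical
  refine ⟨Fin (2*n+1), inferInstance, ![GA n, GB n, GC n],
    ![Finset.univ.filter (fun v => v.val ≤ n), Finset.univ.filter (fun v => n ≤ v.val),
      {⟨0, by omega⟩, ⟨2*n, by omega⟩}], ?_, ?_, ?_, ?_⟩
  · intro i u v huv
    fin_cases i <;>
      simp only [Matrix.cons_val_zero, Matrix.cons_val_one, Matrix.head_cons,
        Matrix.cons_val_two, Matrix.tail_cons, GA, GB, GC, SimpleGraph.fromRel_adj] at huv ⊢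
    · obtain ⟨h1, h2 | h2⟩ := huv <;> simp [h2.1, h2.2.1]
    · obtain ⟨h1, h2 | h2⟩ := huv <;> simp [h2.1, h2.2.1]
    · obtain ⟨h1, h2 | h2⟩ := huv <;> simp [Fin.ext_iff, h2.1, h2.2]
  · intro i j hij
    fin_cases i <;> fin_cases j <;> first
      | exact absurd rfl hij
      | (apply Finset.card_le_one.mpr
         intro a ha b hb
         simp only [Finset.mem_inter, Finset.mem_filter, Finset.mem_univ, true_and, Finset.mem_insert,
           Finset.mem_singleton, Fin.isValue, Matrix.cons_val_zero, Matrix.cons_val_one, Matrix.cons_val_two,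
           Matrix.head_cons, Matrix.tail_cons, Fin.reduceFinMk, Fin.zero_eta, Fin.mk_one, Fin.ext_iff, Fin.val_zero] at ha hb
         omega)
  · intro i
    rw [SimpleGraph.chromaticNumber_le_iff_colorable]
    fin_cases i
    · refine ⟨SimpleGraph.Coloring.mk
        (fun v => (⟨v.val % n, Nat.mod_lt _ (by omega)⟩ : Fin n)) ?_⟩
      intro u v huv
      have huv : (GA n).Adj u v := huv
      rw [GA, SimpleGraph.fromRel_adj] at huv
      obtain ⟨hne, h⟩ := huv
      have hne' : u.val ≠ v.val := fun h => hne (Fin.ext h)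
      have h' : u.val ≤ n ∧ v.val ≤ n ∧ ¬(u.val = 0 ∧ v.val = n) ∧ ¬(u.val = n ∧ v.val = 0) := by
        tauto
      obtain ⟨h1, h2, h3, h4⟩ := h'
      have hmod : ∀ w : Fin (2*n+1), w.val ≤ n → w.val % n = if w.val = n then 0 else w.val := by
        intro w hw
        split_ifs with h
        · simp [h]
        · exact Nat.mod_eq_of_lt (by omega)
      simp only [ne_eq, Fin.mk.injEq]
      rw [hmod u h1, hmod v h2]
      split_ifs <;> omega
    · refine ⟨SimpleGraph.Coloring.mk
        (fun v => (⟨(v.val - n) % n, Nat.mod_lt _ (by omega)⟩ : Fin n)) ?_⟩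
      intro u v huv
      have huv : (GB n).Adj u v := huv
      rw [GB, SimpleGraph.fromRel_adj] at huv
      obtain ⟨hne, h⟩ := huv
      have hne' : u.val ≠ v.val := fun h => hne (Fin.ext h)
      have h' : n ≤ u.val ∧ n ≤ v.val ∧ ¬(u.val = n ∧ v.val = 2*n) ∧ ¬(u.val = 2*n ∧ v.val = n) := by
        tauto
      obtain ⟨h1, h2, h3, h4⟩ := h'
      have hu2 : u.val ≤ 2*n := by omega
      have hv2 : v.val ≤ 2*n := by omega
      have hmod : ∀ w : Fin (2*n+1), n ≤ w.val →
          (w.val - n) % n = if w.val = 2*n then 0 else w.val - n := by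
        intro w hw
        split_ifs with h
        · rw [h, show 2*n-n = n by omega, Nat.mod_self]
        · have : w.val ≤ 2*n := by omega
          exact Nat.mod_eq_of_lt (by omega)
      simp only [ne_eq, Fin.mk.injEq]
      rw [hmod u h1, hmod v h2]
      split_ifs <;> omega
    · refine ⟨SimpleGraph.Coloring.mk
        (fun v => if v.val = 0 then (⟨0, by omega⟩ : Fin n) else ⟨1, by omega⟩) ?_⟩
      intro u v huv
      have huv : (GC n).Adj u v := huv
      rw [GC, SimpleGraph.fromRel_adj] at huv
      obtain ⟨hne, h⟩ := huv
      have h' : (u.val = 0 ∧ v.val = 2*n) ∨ (v.val = 0 ∧ u.val = 2*n) := by tauto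
      rcases h' with ⟨ha, hb⟩ | ⟨ha, hb⟩ <;>
        simp only [ne_eq] <;> split_ifs <;> simp [Fin.ext_iff] <;> omega
  · rw [show ((n + 1 : ℕ) : ℕ∞) = (n : ℕ∞) + 1 by push_cast; ring,
      ENat.add_one_le_iff (by simp)]
    rw [← not_le]
    intro hle
    rw [SimpleGraph.chromaticNumber_le_iff_colorable] at hle
    obtain ⟨C⟩ := hle
    have hGA : ∀ u v : Fin (2*n+1), (GA n).Adj u v → C u ≠ C v := by
      intro u v h
      exact C.valid (by rw [SimpleGraph.iSup_adj]; exact ⟨0, h⟩)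
    have hGB : ∀ u v : Fin (2*n+1), (GB n).Adj u v → C u ≠ C v := by
      intro u v h
      exact C.valid (by rw [SimpleGraph.iSup_adj]; exact ⟨1, h⟩)
    have hGC : ∀ u v : Fin (2*n+1), (GC n).Adj u v → C u ≠ C v := by
      intro u v h
      exact C.valid (by rw [SimpleGraph.iSup_adj]; exact ⟨2, h⟩)
    have h1 : C ⟨0, by omega⟩ = C ⟨n, by omega⟩ := by
      have := key n (by omega) (fun i : Fin (n+1) => C ⟨i.val, by omega⟩) ?_
      · simpa using this
      · intro i j hij hp hq
        apply hGA
        simp only [GA, SimpleGraph.fromRel_adj]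
        refine ⟨?_, Or.inl ⟨Nat.lt_succ_iff.mp i.isLt, Nat.lt_succ_iff.mp j.isLt, ?_, ?_⟩⟩
        · simp only [ne_eq, Fin.mk.injEq]
          exact fun h => hij (Fin.ext h)
        · rintro ⟨hi, hj⟩
          exact hp ⟨Fin.ext hi, Fin.ext hj⟩
        · rintro ⟨hi, hj⟩
          exact hq ⟨Fin.ext hi, Fin.ext hj⟩
    have hnn : (⟨2*n, by omega⟩ : Fin (2*n+1)) = ⟨n + n, by omega⟩ := Fin.ext (two_mul n)
    have h2 : C ⟨n, by omega⟩ = C ⟨2*n, by omega⟩ := by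
      have := key n (by omega) (fun i : Fin (n+1) => C ⟨n + i.val, by omega⟩) ?_
      · rw [hnn]; simpa using this
      · intro i j hij hp hq
        apply hGB
        simp only [GB, SimpleGraph.fromRel_adj]
        refine ⟨?_, Or.inl ⟨by omega, by omega, ?_, ?_⟩⟩
        · simp only [ne_eq, Fin.mk.injEq]
          intro h
          exact hij (Fin.ext (by omega))
        · rintro ⟨hi, hj⟩
          have hi' : n + i.val = n := hi
          have hj' : n + j.val = 2*n := hj
          refine hp ⟨Fin.ext ?_, Fin.ext ?_⟩ <;> simp only [Fin.val_zero, Fin.val_last] <;> omega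
        · rintro ⟨hi, hj⟩
          have hi' : n + i.val = 2*n := hi
          have hj' : n + j.val = n := hj
          refine hq ⟨Fin.ext ?_, Fin.ext ?_⟩ <;> simp only [Fin.val_zero, Fin.val_last] <;> omega
    have h3 : C ⟨0, by omega⟩ ≠ C ⟨2*n, by omega⟩ := by
      apply hGC
      simp only [GC, SimpleGraph.fromRel_adj, ne_eq, Fin.ext_iff]
      refine ⟨by simp; omega, Or.inl ⟨?_, ?_⟩⟩ <;> simp
    exact h3 (h1.trans h2)
end

section
/- For every C ≥ 1 and 0 < ε < 1 there exists D₂ = D₂(C, ε) such that the following holds for every D ≥ D₂: if log⁻¹ D ≥ p ≥ log⁻² D and 10CD ≥ Λ ≥ (1 + ε)D, then (λ'(Λ, D, C, p) − Λ^{4/5}) / (D'(Λ, D, C, p) + D^{4/5}) ≥ (1 + εp/4) · Λ/D, and moreover D'(Λ, D, C, p) ≥ (1 − pC)D. -/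
open Filter

set_option maxHeartbeats 1000000

lemma exp_neg_le (x : ℝ) (hx : 0 ≤ x) : Real.exp (-x) ≤ 1 - x + x ^ 2 := by
  have h1 : x + 1 ≤ Real.exp x := Real.add_one_le_exp x
  have h2 : Real.exp (-x) = (Real.exp x)⁻¹ := Real.exp_neg x
  have hex : (0:ℝ) < Real.exp x := Real.exp_pos x
  have h3 : (Real.exp x)⁻¹ ≤ (1 + x)⁻¹ := by
    apply inv_anti₀ (by linarith) (by linarith)
  have h4 : (1 + x)⁻¹ ≤ 1 - x + x ^ 2 := by
    rw [inv_le_iff_one_le_mul₀ (by linarith)]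
    nlinarith [pow_nonneg hx 3]
  rw [h2]; linarith

lemma rpow_ub (q y : ℝ) (hq1 : q < 1) (hy : 0 ≤ y) :
    (1 - q) ^ y ≤ Real.exp (-(y * q)) := by
  have hpos : (0:ℝ) < 1 - q := by linarith
  rw [Real.rpow_def_of_pos hpos]
  apply Real.exp_le_exp.2
  have : Real.log (1 - q) ≤ -q := by
    have := Real.log_le_sub_one_of_pos hpos; linarith
  nlinarith

lemma rpow_lb (q y : ℝ) (hq0 : 0 ≤ q) (hq1 : q ≤ 1/2) (hy : 0 ≤ y) :
    1 - y * q - 2 * (y * q) * q ≤ (1 - q) ^ y := by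
  have hpos : (0:ℝ) < 1 - q := by linarith
  rw [Real.rpow_def_of_pos hpos]
  have hlog : -(q * (1 + 2*q)) ≤ Real.log (1 - q) := by
    have hinv : (0:ℝ) < (1 - q)⁻¹ := by positivity
    have h1 : Real.log ((1-q)⁻¹) ≤ (1-q)⁻¹ - 1 := Real.log_le_sub_one_of_pos hinv
    have h2 : Real.log ((1-q)⁻¹) = - Real.log (1-q) := Real.log_inv _
    have h3 : (1-q)⁻¹ - 1 = q / (1-q) := by field_simp; ring
    have h4 : q / (1-q) ≤ q * (1 + 2*q) := by
      rw [div_le_iff₀ hpos]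
      nlinarith [mul_nonneg (mul_nonneg hq0 hq0) (by linarith : (0:ℝ) ≤ 1 - 2*q)]
    linarith
  calc 1 - y * q - 2 * (y * q) * q ≤ 1 + Real.log (1 - q) * y := by nlinarith
    _ ≤ Real.exp (Real.log (1 - q) * y) := by
        have := Real.add_one_le_exp (Real.log (1 - q) * y); linarith

/-- The purely polynomial core inequality. -/
lemma key_poly (ε p q s t d r : ℝ) (hε0 : 0 < ε) (hε1 : ε ≤ 1) (hp0 : 0 < p)
    (hpsmall : p ≤ 1/200) (hq0 : 0 ≤ q) (hqp : q ≤ p) (hs0 : 0 ≤ s)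
    (hssmall : s ≤ 1/200) (ht0 : 0 ≤ t) (htsmall : t ≤ 1/200)
    (hts : t = s + d) (hd0 : 0 ≤ d) (hpd : ε*p ≤ 2*(p-d))
    (e_a : 2*(t*q) ≤ ε*p/100) (e_b : s^2 ≤ ε*p/200) (e_c : p*s ≤ ε*p/200)
    (e_d : p*t ≤ ε*p/200) (e_e : 2*(p*(t*q)) ≤ ε*p/200)
    (hr0 : 0 ≤ r) (hr24 : 24*r ≤ ε*p) :
    (1 + ε*p/4) * ((1-p)*(1-s+s^2) + p*t*(1+2*q) + r) ≤ 1 - t - 2*t*q - r := by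
  have hr' : r ≤ 1/4800 := by nlinarith
  have eK : (1-p)*(1-s+s^2) + p*t*(1+2*q) + r ≤ 11/10 := by
    have nn1 : (0:ℝ) ≤ 1 - s + s^2 := by nlinarith [sq_nonneg (1-s)]
    have b1 : (1-p)*(1-s+s^2) ≤ 1*(1-s+s^2) :=
      mul_le_mul_of_nonneg_right (by linarith) nn1
    have hs2 : s*s ≤ 1/40000 := by
      have w := mul_le_mul hssmall hssmall hs0 (by norm_num : (0:ℝ) ≤ 1/200)
      linarith only [w]
    have bpt : p*t ≤ 1/40000 := by
      nlinarith [mul_le_mul hpsmall htsmall ht0 (by norm_num : (0:ℝ) ≤ 1/200)]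
    have bptq : p*t*(1+2*q) ≤ (1/40000)*(1+2*q) :=
      mul_le_mul_of_nonneg_right bpt (by linarith)
    nlinarith [b1, hs2, bptq]
  have hZ : (ε*p/4) * ((1-p)*(1-s+s^2) + p*t*(1+2*q) + r) ≤ (11/40)*(ε*p) := by
    have h0 : (0:ℝ) ≤ ε*p/4 := by positivity
    calc (ε*p/4) * ((1-p)*(1-s+s^2) + p*t*(1+2*q) + r)
        ≤ (ε*p/4) * (11/10) := mul_le_mul_of_nonneg_left eK h0
      _ = (11/40)*(ε*p) := by ring
  nlinarith [hZ, hpd, e_a, e_b, e_c, e_d, e_e, hr24,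
    mul_nonneg hp0.le (sq_nonneg s)]



/-- `λ'(Λ, D, C, p) = (1 - p/Λ)^{DC} Λ` (real exponents). -/
noncomputable def lamNew (Λ D C p : ℝ) : ℝ := (1 - p / Λ) ^ (D * C) * Λ

/-- `D'(Λ, D, C, p) = ((1 - p)(1 - p/Λ)^{D(C-1)} + p(1 - (1 - p/Λ)^{DC})) D`. -/
noncomputable def degNew (Λ D C p : ℝ) : ℝ :=
  ((1 - p) * (1 - p / Λ) ^ (D * (C - 1)) + p * (1 - (1 - p / Λ) ^ (D * C))) * D

/-- **Key calculation.**  For every `C ≥ 1` and `0 < ε < 1`, for all sufficiently large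
`D`: if `(log D)⁻¹ ≥ p ≥ (log D)⁻²` and `10CD ≥ Λ ≥ (1 + ε)D`, then the ratio of
`λ'(Λ,D,C,p) - Λ^{4/5}` to `D'(Λ,D,C,p) + D^{4/5}` is at least `(1 + εp/4)·Λ/D`, and
moreover `D'(Λ,D,C,p) ≥ (1 - pC)D`. -/
theorem ratio_improvement (C ε : ℝ) (hC : 1 ≤ C) (hε0 : 0 < ε) (hε1 : ε < 1) :
    ∃ D₂ : ℝ, ∀ D : ℝ, D₂ ≤ D → ∀ p Λ : ℝ,
      p ≤ (Real.log D)⁻¹ → ((Real.log D) ^ 2)⁻¹ ≤ p →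
      Λ ≤ 10 * C * D → (1 + ε) * D ≤ Λ →
      (1 + ε * p / 4) * (Λ / D) ≤
          (lamNew Λ D C p - Λ ^ ((4 : ℝ) / 5)) / (degNew Λ D C p + D ^ ((4 : ℝ) / 5)) ∧
      (1 - p * C) * D ≤ degNew Λ D C p := by
  have hev0 : ∀ᶠ D in atTop, (2:ℝ) ≤ D := eventually_ge_atTop 2
  have hev1 : ∀ᶠ D in atTop, 200*C^2/ε + 3 ≤ Real.log D :=
    Real.tendsto_log_atTop.eventually_ge_atTop _
  have hev2 : ∀ᶠ D in atTop, Real.log D ^ 2 ≤ ε/24 * D ^ ((1:ℝ)/5) := by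
    have h := (isLittleO_log_rpow_rpow_atTop 2 (by norm_num : (0:ℝ) < 1/5)).def
      (show (0:ℝ) < ε/24 by positivity)
    filter_upwards [h, eventually_ge_atTop (1:ℝ),
      Real.tendsto_log_atTop.eventually_ge_atTop 0] with x hx hx1 hlx
    have e1 : Real.log x ^ (2:ℝ) = Real.log x ^ 2 := by
      rw [show (2:ℝ) = ((2:ℕ):ℝ) by norm_num, Real.rpow_natCast]
    have e2 : ‖Real.log x ^ (2:ℝ)‖ = Real.log x ^ 2 := by
      rw [e1, Real.norm_eq_abs, abs_of_nonneg (by positivity)]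
    have e3 : ‖x ^ ((1:ℝ)/5)‖ = x ^ ((1:ℝ)/5) := by
      rw [Real.norm_eq_abs, abs_of_nonneg (Real.rpow_nonneg (by linarith) _)]
    rw [e2, e3] at hx
    exact hx
  obtain ⟨D₂, hD₂⟩ := eventually_atTop.mp ((hev0.and hev1).and hev2)
  refine ⟨D₂, fun D hD p Λ hp1 hp2 hΛ1 hΛ2 => ?_⟩
  obtain ⟨⟨hD2, hMlog⟩, hpow⟩ := hD₂ D hD
  -- basic facts
  have hCε : (0:ℝ) ≤ 200*C^2/ε := by positivity
  have hlog3 : 3 ≤ Real.log D := by linarith only [hMlog, hCε]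
  have hlogpos : 0 < Real.log D := by linarith only [hlog3]
  have hDpos : (0:ℝ) < D := by linarith only [hD2]
  have hp0 : 0 < p := lt_of_lt_of_le (by positivity) hp2
  have hpM : p * (200*C^2/ε + 3) ≤ 1 := by
    have h := mul_le_mul_of_nonneg_left hMlog hp0.le
    have hplog : p * Real.log D ≤ 1 := by
      have h2 := mul_le_mul_of_nonneg_right hp1 hlogpos.le
      rwa [inv_mul_cancel₀ (ne_of_gt hlogpos)] at h2
    linarith only [h, hplog]
  have key1 : 200*C^2*p ≤ ε := by
    have h1 : p * (200*C^2/ε) ≤ 1 := by linarith only [hpM, hp0]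
    have h2 : p * (200*C^2/ε) = (200*C^2*p)/ε := by ring
    rw [h2, div_le_one hε0] at h1
    exact h1
  have hC0 : (0:ℝ) ≤ C := by linarith only [hC]
  have hC2 : 1 ≤ C^2 := by
    have w := mul_le_mul hC hC zero_le_one hC0
    linarith only [w]
  have hp200 : 200 * p ≤ ε := by
    have w : 0 ≤ (C^2 - 1)*p := mul_nonneg (by linarith only [hC2]) hp0.le
    linarith only [w, key1]
  have hpsmall : p ≤ 1/200 := by linarith only [hp200, hε1]
  have hΛpos : 0 < Λ := lt_of_lt_of_le (by positivity) hΛ2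
  have hDΛ : D ≤ Λ := by
    have w : 0 ≤ ε*D := mul_nonneg hε0.le hDpos.le
    linarith only [hΛ2, w]
  have hΛ1' : 1 ≤ Λ := by linarith only [hDΛ, hD2]
  -- q and its bounds
  set q := p / Λ with hqdef
  have hq0 : 0 < q := div_pos hp0 hΛpos
  have hqp : q ≤ p := div_le_self hp0.le hΛ1'
  have hq2 : q ≤ 1/2 := by linarith only [hqp, hpsmall]
  have hq1 : q < 1 := by linarith only [hq2]
  -- exponents
  have hyC : 0 ≤ D * C := mul_nonneg hDpos.le hC0
  have hyC1 : 0 ≤ D * (C - 1) := mul_nonneg hDpos.le (by linarith only [hC])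
  set A := (1 - q) ^ (D * C) with hAdef
  set B := (1 - q) ^ (D * (C - 1)) with hBdef
  set t := D * C * q with htdef
  set s := D * (C - 1) * q with hsdef
  set d := D * q with hddef
  have hts : t = s + d := by rw [htdef, hsdef, hddef]; ring
  have hd0 : 0 < d := by rw [hddef]; exact mul_pos hDpos hq0
  have hs0 : 0 ≤ s := by rw [hsdef]; exact mul_nonneg hyC1 hq0.le
  have hst : s ≤ t := by linarith only [hts, hd0]
  have hd_le : (1 + ε) * d ≤ p := by
    have h1 : (1+ε) * D * (p/Λ) ≤ Λ * (p/Λ) :=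
      mul_le_mul_of_nonneg_right hΛ2 (by positivity)
    have h2 : Λ * (p/Λ) = p := by field_simp
    rw [hddef, hqdef]; rw [h2] at h1; linarith only [h1]
  have hdp : d ≤ p := by
    have w : 0 ≤ ε*d := mul_nonneg hε0.le hd0.le
    linarith only [hd_le, w]
  have hTCd : t = C * d := by rw [htdef, hddef]; ring
  have htCp : t ≤ C*p := by
    have w := mul_le_mul_of_nonneg_left hdp hC0
    linarith only [hTCd, w]
  have hCp0 : 0 < C*p := mul_pos (by linarith only [hC]) hp0
  have hCp200 : 200*(C*p) ≤ ε := by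
    have w : 0 ≤ (C*(C-1))*p :=
      mul_nonneg (mul_nonneg hC0 (by linarith only [hC])) hp0.le
    linarith only [w, key1]
  have hCp2 : 200*((C*p)*(C*p)) ≤ ε * p := by
    have w := mul_le_mul_of_nonneg_right key1 hp0.le
    linarith only [w]
  have hCpsmall : C*p ≤ 1/200 := by linarith only [hCp200, hε1]
  have htsmall : t ≤ 1/200 := by linarith only [htCp, hCpsmall]
  have hssmall : s ≤ 1/200 := by linarith only [hst, htsmall]
  have ht0 : 0 < t := by
    rw [htdef]; exact mul_pos (mul_pos hDpos (by linarith only [hC])) hq0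
  -- bounds on A and B
  have hA_ub : A ≤ 1 - t + t^2 := by
    rw [hAdef, htdef]
    calc (1-q) ^ (D*C) ≤ Real.exp (-(D * C * q)) := rpow_ub q (D*C) hq1 hyC
      _ ≤ 1 - (D*C*q) + (D*C*q)^2 := exp_neg_le _ (mul_nonneg hyC hq0.le)
  have hA_le1 : A ≤ 1 := by
    rw [hAdef]
    exact Real.rpow_le_one (by linarith only [hq1]) (by linarith only [hq0]) hyC
  have hA_lb : 1 - t - 2*t*q ≤ A := by
    rw [hAdef, htdef]
    exact rpow_lb q (D*C) hq0.le hq2 hyC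
  have hB_ub : B ≤ 1 - s + s^2 := by
    rw [hBdef, hsdef]
    calc (1-q) ^ (D*(C-1)) ≤ Real.exp (-(D * (C-1) * q)) := rpow_ub q (D*(C-1)) hq1 hyC1
      _ ≤ 1 - (D*(C-1)*q) + (D*(C-1)*q)^2 := exp_neg_le _ (mul_nonneg hyC1 hq0.le)
  have hB_lb : 1 - s - 2*s*q ≤ B := by
    rw [hBdef, hsdef]
    exact rpow_lb q (D*(C-1)) hq0.le hq2 hyC1
  have hB0 : 0 ≤ B := by
    rw [hBdef]; exact Real.rpow_nonneg (by linarith only [hq1]) _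
  -- Part 2
  have hs_ub : (1+ε)*s ≤ (C-1)*p := by
    have hsd : s = (C-1) * d := by rw [hsdef, hddef]; ring
    rw [hsd]
    calc (1+ε)*((C-1)*d) = (C-1)*((1+ε)*d) := by ring
      _ ≤ (C-1)*p := mul_le_mul_of_nonneg_left hd_le (by linarith only [hC])
  have e1 : s*(1+2*q) ≤ (C-1)*p := by
    have w : 0 ≤ s*(ε-2*q) :=
      mul_nonneg hs0 (by linarith only [hqp, hp200, hε0] : (0:ℝ) ≤ ε - 2*q)
    linarith only [hs_ub, w]
  have part2core : 1 - p*C ≤ (1-p)*B + p*(1-A) := by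
    have h1 : 0 ≤ p*(1-A) := mul_nonneg hp0.le (by linarith only [hA_le1])
    have h2 : (1-p)*(1 - s - 2*s*q) ≤ (1-p)*B :=
      mul_le_mul_of_nonneg_left hB_lb (by linarith only [hpsmall])
    have w2 : 0 ≤ p*(s*(1+2*q)) :=
      mul_nonneg hp0.le (mul_nonneg hs0 (by linarith only [hq0]))
    linarith only [e1, h2, h1, w2]
  have part2 : (1 - p * C) * D ≤ degNew Λ D C p := by
    simp only [degNew, ← hqdef, ← hAdef, ← hBdef]
    exact mul_le_mul_of_nonneg_right part2core hDpos.le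
  refine ⟨?_, part2⟩
  -- Part 1
  set E1 := Λ ^ ((4:ℝ)/5) with hE1def
  set E2 := D ^ ((4:ℝ)/5) with hE2def
  have hE2pos : 0 < E2 := by rw [hE2def]; exact Real.rpow_pos_of_pos hDpos _
  have hE1pos : 0 < E1 := by rw [hE1def]; exact Real.rpow_pos_of_pos hΛpos _
  set r := E2 / D with hrdef
  have hr0 : 0 < r := div_pos hE2pos hDpos
  have hr24 : 24 * r ≤ ε * p := by
    have h5 : D ^ ((1:ℝ)/5) * E2 = D := by
      rw [hE2def, ← Real.rpow_add hDpos]; norm_num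
    have hl2 : (0:ℝ) < Real.log D ^ 2 := by positivity
    have hplog2 : 1 ≤ p * Real.log D ^ 2 := by
      have h := mul_le_mul_of_nonneg_right hp2 hl2.le
      rwa [inv_mul_cancel₀ (ne_of_gt hl2)] at h
    have hD15pos : (0:ℝ) < D ^ ((1:ℝ)/5) := Real.rpow_pos_of_pos hDpos _
    have ha : 24 ≤ ε * p * D ^ ((1:ℝ)/5) := by
      have w := mul_le_mul_of_nonneg_left hpow hp0.le
      linarith only [w, hplog2]
    have hb : 24 * E2 ≤ ε * p * D := by
      calc 24 * E2 ≤ (ε * p * D ^ ((1:ℝ)/5)) * E2 :=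
            mul_le_mul_of_nonneg_right ha hE2pos.le
        _ = ε * p * (D ^ ((1:ℝ)/5) * E2) := by ring
        _ = ε * p * D := by rw [h5]
    rw [hrdef, show (24:ℝ) * (E2/D) = 24*E2/D by ring, div_le_iff₀ hDpos]
    linarith only [hb]
  have hE1r : E1 ≤ r * Λ := by
    have h1 : (1:ℝ) ≤ Λ / D := (one_le_div hDpos).2 hDΛ
    have h2 : (Λ/D) ^ ((4:ℝ)/5) ≤ (Λ/D) ^ ((1:ℝ)) :=
      Real.rpow_le_rpow_of_exponent_le h1 (by norm_num)
    rw [Real.rpow_one, Real.div_rpow hΛpos.le hDpos.le] at h2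
    rw [← hE1def, ← hE2def] at h2
    have h3 : E1 ≤ (Λ/D) * E2 := by
      rw [div_le_div_iff₀ hE2pos hDpos] at h2
      rw [div_mul_eq_mul_div, le_div_iff₀ hDpos]
      linarith only [h2]
    calc E1 ≤ (Λ/D) * E2 := h3
      _ = (E2/D) * Λ := by ring
      _ = r * Λ := by rw [hrdef]
  -- error-term bounds
  have hpd : ε*p ≤ 2*(p - d) := by
    have w1 := mul_le_mul_of_nonneg_left hd_le (by linarith only [hε1] : (0:ℝ) ≤ 2-ε)
    have w0 : 0 ≤ ε*(1-ε) := mul_nonneg hε0.le (by linarith only [hε1])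
    have w2 : 0 ≤ (ε*(1-ε))*d := mul_nonneg w0 hd0.le
    linarith only [w1, w2]
  have e_a : 2*(t*q) ≤ ε*p/100 := by
    have w : t*q ≤ (C*p)*p := mul_le_mul htCp hqp hq0.le hCp0.le
    have w2 : (C*p)*p ≤ (ε/200)*p :=
      mul_le_mul_of_nonneg_right (by linarith only [hCp200] : C*p ≤ ε/200) hp0.le
    linarith only [w, w2]
  have e_b : s^2 ≤ ε*p/200 := by
    have w : s*s ≤ (C*p)*(C*p) :=
      mul_le_mul (hst.trans htCp) (hst.trans htCp) hs0 hCp0.le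
    linarith only [w, hCp2]
  have hpCp : p ≤ C*p := by
    have w0 : 0 ≤ (C-1)*p := mul_nonneg (by linarith only [hC]) hp0.le
    linarith only [w0]
  have e_c : p*s ≤ ε*p/200 := by
    have w : p*s ≤ p*(C*p) := mul_le_mul_of_nonneg_left (hst.trans htCp) hp0.le
    have w2 : p*(C*p) ≤ (C*p)*(C*p) := mul_le_mul_of_nonneg_right hpCp hCp0.le
    linarith only [w, w2, hCp2]
  have e_d : p*t ≤ ε*p/200 := by
    have w : p*t ≤ p*(C*p) := mul_le_mul_of_nonneg_left htCp hp0.le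
    have w2 : p*(C*p) ≤ (C*p)*(C*p) := mul_le_mul_of_nonneg_right hpCp hCp0.le
    linarith only [w, w2, hCp2]
  have e_e : 2*(p*(t*q)) ≤ ε*p/200 := by
    have w : t*q ≤ ε*p/200 := by linarith only [e_a]
    have w2 : p*(t*q) ≤ p*(ε*p/200) := mul_le_mul_of_nonneg_left w hp0.le
    have w3 : 0 ≤ (ε*p/200)*(1-2*p) :=
      mul_nonneg (by positivity) (by linarith only [hpsmall])
    linarith only [w2, w3]
  have hkey := key_poly ε p q s t d r hε0 hε1.le hp0 hpsmall hq0.le hqp hs0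
    hssmall ht0.le htsmall hts hd0.le hpd e_a e_b e_c e_d e_e hr0.le hr24
  have key : (1 + ε*p/4) * ((1-p)*B + p*(1-A) + r) ≤ A - r := by
    have hpos4 : (0:ℝ) < 1 + ε*p/4 := by positivity
    have hub : (1-p)*B + p*(1-A) + r ≤ (1-p)*(1-s+s^2) + p*t*(1+2*q) + r := by
      have h2 : (1-p)*B ≤ (1-p)*(1-s+s^2) :=
        mul_le_mul_of_nonneg_left hB_ub (by linarith only [hpsmall])
      have h3 : p*(1-A) ≤ p*(t*(1+2*q)) := by
        apply mul_le_mul_of_nonneg_left _ hp0.le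
        linarith only [hA_lb]
      linarith only [h2, h3]
    calc (1 + ε*p/4) * ((1-p)*B + p*(1-A) + r)
        ≤ (1 + ε*p/4) * ((1-p)*(1-s+s^2) + p*t*(1+2*q) + r) :=
          mul_le_mul_of_nonneg_left hub hpos4.le
      _ ≤ 1 - t - 2*t*q - r := hkey
      _ ≤ A - r := by linarith only [hA_lb]
  -- assemble
  have hdegpos : 0 < degNew Λ D C p + E2 := by
    have hpc : 0 < (1 - p*C)*D :=
      mul_pos (by linarith only [hCpsmall]) hDpos
    linarith only [part2, hE2pos, hpc]
  rw [le_div_iff₀ hdegpos]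
  simp only [lamNew, degNew, ← hqdef, ← hAdef, ← hBdef]
  have hre : (Λ/D) * (((1-p)*B + p*(1-A))*D + E2) = ((1-p)*B + p*(1-A) + r)*Λ := by
    rw [hrdef]; field_simp
  calc (1 + ε*p/4) * (Λ/D) * (((1-p)*B + p*(1-A))*D + E2)
      = (1 + ε*p/4) * (((1-p)*B + p*(1-A) + r)*Λ) := by rw [mul_assoc, hre]
    _ = ((1 + ε*p/4) * ((1-p)*B + p*(1-A) + r))*Λ := by ring
    _ ≤ (A - r)*Λ := mul_le_mul_of_nonneg_right key hΛpos.le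
    _ = A*Λ - r*Λ := by ring
    _ ≤ A*Λ - E1 := by linarith only [hE1r]
end

section
/- Let G be a graph with list assignment L and let D be a positive real. If |L(v)| ≥ 8D for every v ∈ V(G) and Δ(G, L) ≤ D, then G is L-colorable. -/
open Finset

variable {V : Type} [Fintype V] [DecidableEq V]

/-- The finset of proper `L`-colorings of the subgraph induced on `S`
(extended by `0` outside `S`). -/
def RFLcol (G : SimpleGraph V) [DecidableRel G.Adj] (L : V → Finset ℕ)
    (S : Finset V) : Finset (V → ℕ) :=
  (Fintype.piFinset fun v => if v ∈ S then L v else {0}).filter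
    fun φ => ∀ u ∈ S, ∀ w ∈ S, G.Adj u w → φ u ≠ φ w

lemma mem_RFLcol {G : SimpleGraph V} [DecidableRel G.Adj] {L : V → Finset ℕ}
    {S : Finset V} {φ : V → ℕ} :
    φ ∈ RFLcol G L S ↔
      (∀ v, φ v ∈ if v ∈ S then L v else ({0} : Finset ℕ)) ∧
      ∀ u ∈ S, ∀ w ∈ S, G.Adj u w → φ u ≠ φ w := by
  simp [RFLcol, Fintype.mem_piFinset]

lemma RFLcol_empty (G : SimpleGraph V) [DecidableRel G.Adj] (L : V → Finset ℕ) :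
    (RFLcol G L (∅ : Finset V)).card = 1 := by
  have : RFLcol G L (∅ : Finset V) = {fun _ => 0} := by
    ext φ
    simp [mem_RFLcol, funext_iff]
  simp [this]

/-- Splitting: inserting a new vertex `v`, the colorings of `insert v S` are at least
the sum over colors `c ∈ L v` of colorings of `S` avoiding `c` on neighbors of `v`. -/
lemma RFLcol_insert_ge (G : SimpleGraph V) [DecidableRel G.Adj] (L : V → Finset ℕ)
    (S : Finset V) (v : V) (hv : v ∉ S) :
    ∑ c ∈ L v, ((RFLcol G L S).filter fun φ => ∀ u ∈ S, G.Adj v u → φ u ≠ c).card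
      ≤ (RFLcol G L (insert v S)).card := by
  classical
  set F : ℕ → Finset (V → ℕ) := fun c =>
    ((RFLcol G L S).filter fun φ => ∀ u ∈ S, G.Adj v u → φ u ≠ c).image
      (fun φ => Function.update φ v c) with hF
  have hval0 : ∀ φ ∈ RFLcol G L S, φ v = 0 := by
    intro φ hφ
    have := (mem_RFLcol.1 hφ).1 v
    simpa [hv] using this
  have hcard : ∀ c, ((RFLcol G L S).filter fun φ => ∀ u ∈ S, G.Adj v u → φ u ≠ c).card
      = (F c).card := by
    intro c
    refine (Finset.card_image_of_injOn ?_).symm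
    intro φ hφ ψ hψ h
    have hφ0 := hval0 φ (mem_filter.1 hφ).1
    have hψ0 := hval0 ψ (mem_filter.1 hψ).1
    funext w
    by_cases hw : w = v
    · subst hw; rw [hφ0, hψ0]
    · have := congrFun h w
      simpa [Function.update_of_ne hw] using this
  have hdisj : ∀ c₁ ∈ L v, ∀ c₂ ∈ L v, c₁ ≠ c₂ → Disjoint (F c₁) (F c₂) := by
    intro c₁ _ c₂ _ hne
    refine Finset.disjoint_left.2 ?_
    intro ψ h1 h2
    obtain ⟨φ₁, -, rfl⟩ := Finset.mem_image.1 h1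
    obtain ⟨φ₂, -, h⟩ := Finset.mem_image.1 h2
    apply hne
    have := congrFun h v
    simpa using this.symm
  have hsub : (L v).biUnion F ⊆ RFLcol G L (insert v S) := by
    intro ψ hψ
    obtain ⟨c, hc, hψc⟩ := Finset.mem_biUnion.1 hψ
    obtain ⟨φ, hφ, rfl⟩ := Finset.mem_image.1 hψc
    obtain ⟨hφmem, hgood⟩ := Finset.mem_filter.1 hφ
    obtain ⟨hφL, hφprop⟩ := mem_RFLcol.1 hφmem
    refine mem_RFLcol.2 ⟨?_, ?_⟩
    · intro w
      by_cases hw : w = v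
      · subst hw; simpa using hc
      · have := hφL w
        rw [Function.update_of_ne hw]
        simpa [Finset.mem_insert, hw] using this
    · intro u hu w hw hadj
      rcases Finset.mem_insert.1 hu with h | huS
      · rcases Finset.mem_insert.1 hw with h2 | hwS
        · rw [h, h2] at hadj; exact absurd hadj (G.loopless.irrefl _)
        · have hwv : w ≠ v := fun hh => hv (hh ▸ hwS)
          rw [h] at hadj ⊢
          have hne := hgood w hwS hadj
          simpa [Function.update_of_ne hwv] using Ne.symm hne
      · have huv : u ≠ v := fun hh => hv (hh ▸ huS)
        rcases Finset.mem_insert.1 hw with h2 | hwS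
        · rw [h2] at hadj ⊢
          have hne := hgood u huS (G.adj_symm hadj)
          simpa [Function.update_of_ne huv] using hne
        · have hwv : w ≠ v := fun hh => hv (hh ▸ hwS)
          have hne := hφprop u huS w hwS hadj
          simpa [Function.update_of_ne huv, Function.update_of_ne hwv] using hne
  calc ∑ c ∈ L v, ((RFLcol G L S).filter fun φ => ∀ u ∈ S, G.Adj v u → φ u ≠ c).card
      = ∑ c ∈ L v, (F c).card := by
        exact Finset.sum_congr rfl fun c _ => hcard c
    _ = ((L v).biUnion F).card := (Finset.card_biUnion hdisj).symm
    _ ≤ (RFLcol G L (insert v S)).card := Finset.card_le_card hsub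

/-- Fixing the color of an element of `S` drops into colorings of `S.erase u`. -/
lemma RFLcol_fix_le (G : SimpleGraph V) [DecidableRel G.Adj] (L : V → Finset ℕ)
    (S : Finset V) (u : V) (c : ℕ) (hu : u ∈ S) :
    ((RFLcol G L S).filter fun φ => φ u = c).card ≤ (RFLcol G L (S.erase u)).card := by
  classical
  refine Finset.card_le_card_of_injOn (fun φ => Function.update φ u 0) ?_ ?_
  · intro φ hφ
    obtain ⟨hφmem, hφc⟩ := Finset.mem_filter.1 hφ
    obtain ⟨hφL, hφprop⟩ := mem_RFLcol.1 hφmem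
    refine mem_RFLcol.2 ⟨?_, ?_⟩
    · intro w
      by_cases hw : w = u
      · subst hw; simp
      · have := hφL w
        simp only [Function.update_of_ne hw]
        simpa [Finset.mem_erase, hw] using this
    · intro a ha b hb hadj
      have hau : a ≠ u := (Finset.mem_erase.1 ha).1
      have hbu : b ≠ u := (Finset.mem_erase.1 hb).1
      have := hφprop a (Finset.mem_of_mem_erase ha) b (Finset.mem_of_mem_erase hb) hadj
      simpa [Function.update_of_ne hau, Function.update_of_ne hbu] using this
  · intro φ hφ ψ hψ h
    obtain ⟨-, hφc⟩ := Finset.mem_filter.1 hφ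
    obtain ⟨-, hψc⟩ := Finset.mem_filter.1 hψ
    funext w
    by_cases hw : w = u
    · subst hw; rw [hφc, hψc]
    · have := congrFun h w
      simpa [Function.update_of_ne hw] using this

/-- Union bound for the "bad" colorings of `S` that put color `c` on a neighbor of `v`. -/
lemma RFLcol_bad_le (G : SimpleGraph V) [DecidableRel G.Adj] (L : V → Finset ℕ)
    (S : Finset V) (v : V) (c : ℕ) :
    ((RFLcol G L S).filter fun φ => ¬ ∀ u ∈ S, G.Adj v u → φ u ≠ c).card
      ≤ ∑ u ∈ ((G.neighborFinset v ∩ S).filter fun u => c ∈ L u),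
          ((RFLcol G L S).filter fun φ => φ u = c).card := by
  classical
  set T := (G.neighborFinset v ∩ S).filter fun u => c ∈ L u with hT
  have hsub : ((RFLcol G L S).filter fun φ => ¬ ∀ u ∈ S, G.Adj v u → φ u ≠ c)
      ⊆ T.biUnion fun u => (RFLcol G L S).filter fun φ => φ u = c := by
    intro φ hφ
    obtain ⟨hφmem, hbad⟩ := Finset.mem_filter.1 hφ
    push_neg at hbad
    obtain ⟨u, hu, hadj, hc⟩ := hbad
    refine Finset.mem_biUnion.2 ⟨u, ?_, Finset.mem_filter.2 ⟨hφmem, hc⟩⟩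
    have hLu : c ∈ L u := by
      have := (mem_RFLcol.1 hφmem).1 u
      rw [if_pos hu] at this
      exact hc ▸ this
    exact Finset.mem_filter.2 ⟨Finset.mem_inter.2 ⟨(G.mem_neighborFinset v u).2 hadj, hu⟩, hLu⟩
  exact le_trans (Finset.card_le_card hsub) (Finset.card_biUnion_le)

lemma RFLcol_main (G : SimpleGraph V) [DecidableRel G.Adj] (L : V → Finset ℕ)
    (D : ℝ) (hD : 0 < D)
    (hL : ∀ v, 8 * D ≤ ((L v).card : ℝ))
    (hdeg : ∀ v, ∀ c ∈ L v,
      ((((G.neighborFinset v).filter fun u => c ∈ L u).card : ℝ) ≤ D)) :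
    ∀ n : ℕ, ∀ S : Finset V, S.card ≤ n → ∀ v ∉ S,
      ((L v).card : ℝ) / 2 * ((RFLcol G L S).card : ℝ)
        ≤ ((RFLcol G L (insert v S)).card : ℝ) := by
  classical
  intro n
  induction n with
  | zero =>
    intro S hS v hv
    have hSe : S = ∅ := Finset.card_eq_zero.1 (Nat.le_zero.1 hS)
    subst hSe
    -- every coloring avoids conflicts trivially
    have hsplit := RFLcol_insert_ge G L ∅ v hv
    have : ∀ c ∈ L v, ((RFLcol G L (∅:Finset V)).filter
        fun φ => ∀ u ∈ (∅:Finset V), G.Adj v u → φ u ≠ c) = RFLcol G L (∅:Finset V) := by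
      intro c _
      apply Finset.filter_true_of_mem
      intro φ _ u hu
      exact absurd hu (Finset.notMem_empty u)
    rw [Finset.sum_congr rfl fun c hc => by rw [this c hc]] at hsplit
    simp only [Finset.sum_const, smul_eq_mul] at hsplit
    have h2 : ((L v).card : ℝ) * ((RFLcol G L (∅:Finset V)).card : ℝ)
        ≤ ((RFLcol G L (insert v (∅:Finset V))).card : ℝ) := by exact_mod_cast hsplit
    have hc0 : (0:ℝ) ≤ ((L v).card : ℝ) := Nat.cast_nonneg _
    have hf0 : (0:ℝ) ≤ ((RFLcol G L (∅:Finset V)).card : ℝ) := Nat.cast_nonneg _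
    nlinarith
  | succ n ih =>
    intro S hS v hv
    have hfS0 : (0:ℝ) ≤ ((RFLcol G L S).card : ℝ) := Nat.cast_nonneg _
    -- good count per color
    have key : ∀ c ∈ L v,
        ((RFLcol G L S).card : ℝ) / 2
          ≤ (((RFLcol G L S).filter fun φ => ∀ u ∈ S, G.Adj v u → φ u ≠ c).card : ℝ) := by
      intro c hc
      set T := (G.neighborFinset v ∩ S).filter fun u => c ∈ L u with hT
      have hTS : ∀ u ∈ T, u ∈ S := fun u hu =>
        (Finset.mem_inter.1 (Finset.mem_filter.1 hu).1).2
      -- each fixed-color count is small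
      have hfix : ∀ u ∈ T, (((RFLcol G L S).filter fun φ => φ u = c).card : ℝ)
          ≤ ((RFLcol G L S).card : ℝ) / (4 * D) := by
        intro u hu
        have huS := hTS u hu
        have h1 : (((RFLcol G L S).filter fun φ => φ u = c).card : ℝ)
            ≤ ((RFLcol G L (S.erase u)).card : ℝ) := by
          exact_mod_cast RFLcol_fix_le G L S u c huS
        have hcard : (S.erase u).card ≤ n := by
          have h := Finset.card_erase_of_mem huS
          have h2 : 1 ≤ S.card := Finset.card_pos.2 ⟨u, huS⟩
          omega
        have hih := ih (S.erase u) hcard u (Finset.notMem_erase u S)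
        rw [Finset.insert_erase huS] at hih
        have hLu : 8 * D ≤ ((L u).card : ℝ) := hL u
        have hLu0 : (0:ℝ) < ((L u).card : ℝ) := by nlinarith
        have hE0 : (0:ℝ) ≤ ((RFLcol G L (S.erase u)).card : ℝ) := Nat.cast_nonneg _
        -- from hih : ℓ_u/2 * f(erase) ≤ f S, deduce f(erase) ≤ f S / (4D)
        have h2 : ((RFLcol G L (S.erase u)).card : ℝ)
            ≤ ((RFLcol G L S).card : ℝ) / (4 * D) := by
          rw [le_div_iff₀ (by positivity)]
          nlinarith
        exact le_trans h1 h2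
      -- the bad set is small
      have hTcard : ((T.card : ℝ)) ≤ D := by
        have hsub : T ⊆ (G.neighborFinset v).filter fun u => c ∈ L u := by
          intro u hu
          obtain ⟨hu1, hu2⟩ := Finset.mem_filter.1 hu
          exact Finset.mem_filter.2 ⟨(Finset.mem_inter.1 hu1).1, hu2⟩
        have := Finset.card_le_card hsub
        calc (T.card : ℝ) ≤ (((G.neighborFinset v).filter fun u => c ∈ L u).card : ℝ) := by
              exact_mod_cast this
          _ ≤ D := hdeg v c hc
      have hbad : (((RFLcol G L S).filter
          fun φ => ¬ ∀ u ∈ S, G.Adj v u → φ u ≠ c).card : ℝ)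
          ≤ ((RFLcol G L S).card : ℝ) / 4 := by
        have h1 := RFLcol_bad_le G L S v c
        have h2 : ((((RFLcol G L S).filter
            fun φ => ¬ ∀ u ∈ S, G.Adj v u → φ u ≠ c).card : ℝ))
            ≤ ∑ u ∈ T, (((RFLcol G L S).filter fun φ => φ u = c).card : ℝ) := by
          exact_mod_cast h1
        have h3 : ∑ u ∈ T, (((RFLcol G L S).filter fun φ => φ u = c).card : ℝ)
            ≤ ∑ u ∈ T, ((RFLcol G L S).card : ℝ) / (4 * D) :=
          Finset.sum_le_sum hfix
        have h4 : ∑ u ∈ T, ((RFLcol G L S).card : ℝ) / (4 * D)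
            = (T.card : ℝ) * (((RFLcol G L S).card : ℝ) / (4 * D)) := by
          rw [Finset.sum_const, nsmul_eq_mul]
        have h5 : (T.card : ℝ) * (((RFLcol G L S).card : ℝ) / (4 * D))
            ≤ ((RFLcol G L S).card : ℝ) / 4 := by
          have hx : (0:ℝ) ≤ ((RFLcol G L S).card : ℝ) / (4 * D) := by positivity
          calc (T.card : ℝ) * (((RFLcol G L S).card : ℝ) / (4 * D))
              ≤ D * (((RFLcol G L S).card : ℝ) / (4 * D)) :=
                mul_le_mul_of_nonneg_right hTcard hx
            _ = ((RFLcol G L S).card : ℝ) / 4 := by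
                field_simp
        calc ((((RFLcol G L S).filter
            fun φ => ¬ ∀ u ∈ S, G.Adj v u → φ u ≠ c).card : ℝ))
            ≤ ∑ u ∈ T, (((RFLcol G L S).filter fun φ => φ u = c).card : ℝ) := h2
          _ ≤ _ := h3
          _ = _ := h4
          _ ≤ _ := h5
      -- good + bad = total
      have hsplitcard : (((RFLcol G L S).filter
            fun φ => ∀ u ∈ S, G.Adj v u → φ u ≠ c).card : ℝ)
          + (((RFLcol G L S).filter
            fun φ => ¬ ∀ u ∈ S, G.Adj v u → φ u ≠ c).card : ℝ)
          = ((RFLcol G L S).card : ℝ) := by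
        have := Finset.card_filter_add_card_filter_not
          (s := RFLcol G L S) (p := fun φ => ∀ u ∈ S, G.Adj v u → φ u ≠ c)
        exact_mod_cast this
      linarith
    -- sum up over colors
    have hsplit : (∑ c ∈ L v, (((RFLcol G L S).filter
          fun φ => ∀ u ∈ S, G.Adj v u → φ u ≠ c).card : ℝ))
        ≤ ((RFLcol G L (insert v S)).card : ℝ) := by
      have := RFLcol_insert_ge G L S v hv
      exact_mod_cast this
    have hsum : ((L v).card : ℝ) * (((RFLcol G L S).card : ℝ) / 2)
        ≤ ∑ c ∈ L v, (((RFLcol G L S).filter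
          fun φ => ∀ u ∈ S, G.Adj v u → φ u ≠ c).card : ℝ) := by
      have := Finset.card_nsmul_le_sum (L v)
        (fun c => (((RFLcol G L S).filter
          fun φ => ∀ u ∈ S, G.Adj v u → φ u ≠ c).card : ℝ))
        (((RFLcol G L S).card : ℝ) / 2) key
      simpa [nsmul_eq_mul] using this
    calc ((L v).card : ℝ) / 2 * ((RFLcol G L S).card : ℝ)
        = ((L v).card : ℝ) * (((RFLcol G L S).card : ℝ) / 2) := by ring
      _ ≤ _ := hsum
      _ ≤ _ := hsplit

/-- **Reed's finishing lemma.**  If `L` is a list assignment for a graph `G` with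
`|L(v)| ≥ 8D` for every vertex `v` and maximum color degree `Δ(G, L) ≤ D` for a
positive real `D`, then `G` is `L`-colorable. -/
theorem reed_finishing_lemma (V : Type) [Fintype V] [DecidableEq V]
    (G : SimpleGraph V) [DecidableRel G.Adj] (L : V → Finset ℕ) (D : ℝ) (hD : 0 < D)
    (hL : ∀ v, 8 * D ≤ ((L v).card : ℝ))
    (hdeg : ∀ v, ∀ c ∈ L v,
      ((((G.neighborFinset v).filter fun u => c ∈ L u).card : ℝ) ≤ D)) :
    ∃ φ : V → ℕ, (∀ v, φ v ∈ L v) ∧ ∀ u v, G.Adj u v → φ u ≠ φ v := by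
  classical
  have hpos : ∀ S : Finset V, (0:ℝ) < ((RFLcol G L S).card : ℝ) := by
    intro S
    induction S using Finset.induction_on with
    | empty => rw [RFLcol_empty]; norm_num
    | @insert a S ha ihS =>
      have hmain := RFLcol_main G L D hD hL hdeg S.card S le_rfl a ha
      have hLa : (0:ℝ) < ((L a).card : ℝ) := by have := hL a; nlinarith
      calc (0:ℝ) < ((L a).card : ℝ) / 2 * ((RFLcol G L S).card : ℝ) := by positivity
        _ ≤ _ := hmain
  have huniv := hpos Finset.univ
  have : (RFLcol G L (Finset.univ : Finset V)).Nonempty := by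
    rw [← Finset.card_pos]
    exact_mod_cast huniv
  obtain ⟨φ, hφ⟩ := this
  obtain ⟨hφL, hφprop⟩ := mem_RFLcol.1 hφ
  refine ⟨φ, fun v => ?_, fun u v hadj => ?_⟩
  · have := hφL v
    simpa using this
  · exact hφprop u (Finset.mem_univ u) v (Finset.mem_univ v) hadj
end

section
/- Let G be a graph with correspondence assignment (L, M) and let D be a positive real. If |L(v)| ≥ 8D for every v ∈ V(G) and Δ(G, (L, M)) ≤ D, then G is (L, M)-colorable. -/
open Finset

open Classical in
noncomputable def CS (V : Type) [Fintype V] [DecidableEq V] (G : SimpleGraph V)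
    (L : V → Finset ℕ) (M : V × ℕ → V × ℕ → Prop) (S : Finset V) : Finset (V → ℕ) :=
  (Fintype.piFinset fun v => insert 0 (L v)).filter
    (fun φ => (∀ v ∈ S, φ v ∈ L v) ∧
      (∀ u ∈ S, ∀ w ∈ S, G.Adj u w → ¬ M (u, φ u) (w, φ w)) ∧
      (∀ v, v ∉ S → φ v = 0))

lemma mem_CS {V : Type} [Fintype V] [DecidableEq V] {G : SimpleGraph V}
    {L : V → Finset ℕ} {M : V × ℕ → V × ℕ → Prop} {S : Finset V} {φ : V → ℕ} :
    φ ∈ CS V G L M S ↔ (∀ v ∈ S, φ v ∈ L v) ∧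
      (∀ u ∈ S, ∀ w ∈ S, G.Adj u w → ¬ M (u, φ u) (w, φ w)) ∧
      (∀ v, v ∉ S → φ v = 0) := by
  classical
  simp only [CS, mem_filter, Fintype.mem_piFinset, Finset.mem_insert]
  constructor
  · rintro ⟨-, h⟩; exact h
  · rintro ⟨h1, h2, h3⟩
    refine ⟨fun v => ?_, h1, h2, h3⟩
    by_cases hv : v ∈ S
    · exact Or.inr (h1 v hv)
    · exact Or.inl (h3 v hv)

lemma CS_step {V : Type} [Fintype V] [DecidableEq V] (G : SimpleGraph V)
    [DecidableRel G.Adj]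
    (L : V → Finset ℕ) (M : V × ℕ → V × ℕ → Prop) [DecidableRel M] (D : ℝ) (hD : 0 < D)
    (hMsupp : ∀ q r, M q r → G.Adj q.1 r.1 ∧ q.2 ∈ L q.1 ∧ r.2 ∈ L r.1)
    (hMsymm : ∀ q r, M q r → M r q)
    (hMmatch : ∀ q r r', M q r → M q r' → r.1 = r'.1 → r.2 = r'.2)
    (hL : ∀ v, 8 * D ≤ ((L v).card : ℝ))
    (hdeg : ∀ v, ∀ c ∈ L v,
      ((((G.neighborFinset v).filter fun u => ∃ c' ∈ L u, M (v, c) (u, c')).card : ℝ) ≤ D)) :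
    ∀ n (S : Finset V), S.card = n → ∀ v, v ∉ S →
      ((L v).card : ℝ) / 2 * ((CS V G L M S).card : ℝ)
        ≤ ((CS V G L M (insert v S)).card : ℝ) := by
  classical
  intro n
  induction n using Nat.strong_induction_on with
  | _ n IH =>
  intro S hS v hv
  set A := CS V G L M S with hA
  set Ac : ℕ → Finset (V → ℕ) :=
    fun c => A.filter (fun φ => ∀ u ∈ S, ¬ M (v, c) (u, φ u)) with hAc
  -- membership facts for A
  have hAmem : ∀ φ ∈ A, (∀ w ∈ S, φ w ∈ L w) ∧
      (∀ u ∈ S, ∀ w ∈ S, G.Adj u w → ¬ M (u, φ u) (w, φ w)) ∧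
      (∀ w, w ∉ S → φ w = 0) := fun φ hφ => mem_CS.mp hφ
  -- update into insert v S
  have upd_mem : ∀ c ∈ L v, ∀ φ ∈ Ac c,
      Function.update φ v c ∈ CS V G L M (insert v S) := by
    intro c hc φ hφ
    have hφA : φ ∈ A := (mem_filter.mp hφ).1
    have hφc : ∀ u ∈ S, ¬ M (v, c) (u, φ u) := (mem_filter.mp hφ).2
    obtain ⟨hcol, hprop, hzero⟩ := hAmem φ hφA
    rw [mem_CS]
    refine ⟨?_, ?_, ?_⟩
    · intro w hw
      rcases Finset.mem_insert.mp hw with rfl | hw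
      · simpa using hc
      · have hwv : w ≠ v := fun h => hv (h ▸ hw)
        rw [Function.update_of_ne hwv]
        exact hcol w hw
    · intro u hu w hw hadj hM
      by_cases huv : u = v <;> by_cases hwv : w = v
      · rw [huv, hwv] at hadj
        exact G.loopless.irrefl v hadj
      · have hwS : w ∈ S := (Finset.mem_insert.mp hw).resolve_left hwv
        rw [huv, Function.update_self, Function.update_of_ne hwv] at hM
        exact hφc w hwS hM
      · have huS : u ∈ S := (Finset.mem_insert.mp hu).resolve_left huv
        rw [hwv, Function.update_self, Function.update_of_ne huv] at hM
        exact hφc u huS (hMsymm _ _ hM)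
      · have huS : u ∈ S := (Finset.mem_insert.mp hu).resolve_left huv
        have hwS : w ∈ S := (Finset.mem_insert.mp hw).resolve_left hwv
        rw [Function.update_of_ne huv, Function.update_of_ne hwv] at hM
        exact hprop u huS w hwS hadj hM
    · intro w hw
      have hwv : w ≠ v := fun h => hw (h ▸ Finset.mem_insert_self v S)
      rw [Function.update_of_ne hwv]
      exact hzero w (fun h => hw (Finset.mem_insert_of_mem h))
  -- the big union
  set T : Finset (V → ℕ) :=
    (L v).biUnion (fun c => (Ac c).image (fun φ => Function.update φ v c)) with hT
  have hTsub : T ⊆ CS V G L M (insert v S) := by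
    intro x hx
    obtain ⟨c, hc, hx⟩ := Finset.mem_biUnion.mp hx
    obtain ⟨φ, hφ, rfl⟩ := Finset.mem_image.mp hx
    exact upd_mem c hc φ hφ
  have himgcard : ∀ c, ((Ac c).image (fun φ => Function.update φ v c)).card = (Ac c).card := by
    intro c
    apply Finset.card_image_of_injOn
    intro φ hφ ψ hψ h
    have hφ0 : φ v = 0 := (hAmem φ (mem_filter.mp hφ).1).2.2 v hv
    have hψ0 : ψ v = 0 := (hAmem ψ (mem_filter.mp hψ).1).2.2 v hv
    funext w
    by_cases hwv : w = v
    · subst hwv; rw [hφ0, hψ0]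
    · have := congrFun h w
      simpa [Function.update_of_ne hwv] using this
  have hTcard : T.card = ∑ c ∈ L v, (Ac c).card := by
    rw [hT, Finset.card_biUnion]
    · exact Finset.sum_congr rfl fun c _ => himgcard c
    · intro c hc c' hc' hcc'
      apply Finset.disjoint_left.mpr
      intro x hx hx'
      obtain ⟨φ, -, rfl⟩ := Finset.mem_image.mp hx
      obtain ⟨ψ, -, h⟩ := Finset.mem_image.mp hx'
      have h2 := congrFun h v
      simp only [Function.update_self] at h2
      exact hcc' h2.symm
  -- lower bound for each Ac c
  have key : ∀ c ∈ L v, (3 / 4 : ℝ) * (A.card : ℝ) ≤ ((Ac c).card : ℝ) := by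
    intro c hc
    set bad := A.filter (fun φ => ¬ ∀ u ∈ S, ¬ M (v, c) (u, φ u)) with hbad
    have hsplit : (Ac c).card + bad.card = A.card :=
      Finset.card_filter_add_card_filter_not _
    set Fc := (G.neighborFinset v).filter (fun u => ∃ c' ∈ L u, M (v, c) (u, c')) with hFc
    set Fc' := Fc ∩ S with hFc'
    have hbadsub : bad ⊆ Fc'.biUnion (fun u => A.filter (fun φ => M (v, c) (u, φ u))) := by
      intro φ hφ
      obtain ⟨hφA, hφbad⟩ := mem_filter.mp hφ
      push_neg at hφbad
      obtain ⟨u, hu, hM⟩ := hφbad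
      apply Finset.mem_biUnion.mpr
      refine ⟨u, ?_, mem_filter.mpr ⟨hφA, hM⟩⟩
      rw [hFc', Finset.mem_inter]
      refine ⟨?_, hu⟩
      rw [hFc, mem_filter]
      obtain ⟨hadj, -, hcol⟩ := hMsupp _ _ hM
      exact ⟨(G.mem_neighborFinset v u).mpr hadj, φ u, hcol, hM⟩
    have hperu : ∀ u ∈ Fc', ((A.filter (fun φ => M (v, c) (u, φ u))).card : ℝ)
        ≤ (A.card : ℝ) / (4 * D) := by
      intro u hu
      have huS : u ∈ S := (Finset.mem_inter.mp hu).2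
      have hcount : (A.filter (fun φ => M (v, c) (u, φ u))).card
          ≤ (CS V G L M (S.erase u)).card := by
        apply Finset.card_le_card_of_injOn (fun φ => Function.update φ u 0)
        · intro φ hφ
          obtain ⟨hφA, -⟩ := mem_filter.mp hφ
          obtain ⟨hcol, hprop, hzero⟩ := hAmem φ hφA
          simp only [Finset.mem_coe]
          rw [mem_CS]
          refine ⟨?_, ?_, ?_⟩
          · intro w hw
            have hwu : w ≠ u := Finset.ne_of_mem_erase hw
            rw [Function.update_of_ne hwu]
            exact hcol w (Finset.mem_of_mem_erase hw)
          · intro a ha b hb hadj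
            have hau : a ≠ u := Finset.ne_of_mem_erase ha
            have hbu : b ≠ u := Finset.ne_of_mem_erase hb
            rw [Function.update_of_ne hau, Function.update_of_ne hbu]
            exact hprop a (Finset.mem_of_mem_erase ha) b (Finset.mem_of_mem_erase hb) hadj
          · intro w hw
            by_cases hwu : w = u
            · subst hwu; rw [Function.update_self]
            · rw [Function.update_of_ne hwu]
              exact hzero w (fun h => hw (Finset.mem_erase.mpr ⟨hwu, h⟩))
        · intro φ hφ ψ hψ h
          obtain ⟨hφA, hφM⟩ := mem_filter.mp hφ
          obtain ⟨hψA, hψM⟩ := mem_filter.mp hψ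
          have hfix : φ u = ψ u := hMmatch (v, c) (u, φ u) (u, ψ u) hφM hψM rfl
          funext w
          by_cases hwu : w = u
          · subst hwu; exact hfix
          · have := congrFun h w
            simpa [Function.update_of_ne hwu] using this
      have hcardlt : (S.erase u).card < n := by
        rw [Finset.card_erase_of_mem huS, ← hS]
        exact Nat.sub_lt (Finset.card_pos.mpr ⟨u, huS⟩) one_pos
      have hIH := IH (S.erase u).card hcardlt (S.erase u) rfl u (Finset.notMem_erase u S)
      rw [Finset.insert_erase huS, ← hA] at hIH
      have hLu := hL u
      have hLu2 : (0 : ℝ) < 4 * D := by linarith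
      have hLupos : (0 : ℝ) < ((L u).card : ℝ) / 2 := by linarith
      have h1 : ((CS V G L M (S.erase u)).card : ℝ) ≤ (A.card : ℝ) / (((L u).card : ℝ) / 2) :=
        (le_div_iff₀ hLupos).mpr (by linarith [hIH])
      calc ((A.filter (fun φ => M (v, c) (u, φ u))).card : ℝ)
          ≤ ((CS V G L M (S.erase u)).card : ℝ) := by exact_mod_cast hcount
        _ ≤ (A.card : ℝ) / (((L u).card : ℝ) / 2) := h1
        _ ≤ (A.card : ℝ) / (4 * D) := by
            apply div_le_div_of_nonneg_left (by positivity) hLu2 (by linarith)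
    have hFcard : ((Fc'.card : ℕ) : ℝ) ≤ D := by
      have h1 : Fc'.card ≤ Fc.card := Finset.card_le_card Finset.inter_subset_left
      have h2 := hdeg v c hc
      calc ((Fc'.card : ℕ) : ℝ) ≤ (Fc.card : ℝ) := by exact_mod_cast h1
        _ ≤ D := h2
    have hbadcard : (bad.card : ℝ) ≤ (A.card : ℝ) / 4 := by
      have h1 : bad.card ≤ ∑ u ∈ Fc', (A.filter (fun φ => M (v, c) (u, φ u))).card :=
        le_trans (Finset.card_le_card hbadsub) (Finset.card_biUnion_le)
      have h2 : (bad.card : ℝ) ≤ ∑ u ∈ Fc', ((A.filter (fun φ => M (v, c) (u, φ u))).card : ℝ) := by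
        exact_mod_cast h1
      have h3 : ∑ u ∈ Fc', ((A.filter (fun φ => M (v, c) (u, φ u))).card : ℝ)
          ≤ Fc'.card • ((A.card : ℝ) / (4 * D)) := Finset.sum_le_card_nsmul _ _ _ hperu
      rw [nsmul_eq_mul] at h3
      have h4 : (Fc'.card : ℝ) * ((A.card : ℝ) / (4 * D)) ≤ D * ((A.card : ℝ) / (4 * D)) := by
        apply mul_le_mul_of_nonneg_right hFcard (by positivity)
      have h5 : D * ((A.card : ℝ) / (4 * D)) = (A.card : ℝ) / 4 := by
        field_simp
      linarith
    have hsplitR : ((Ac c).card : ℝ) + (bad.card : ℝ) = (A.card : ℝ) := by exact_mod_cast hsplit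
    linarith
  -- put it together
  have hBT : (T.card : ℝ) ≤ ((CS V G L M (insert v S)).card : ℝ) := by
    exact_mod_cast Finset.card_le_card hTsub
  have hsum : ((L v).card : ℝ) * ((3 / 4 : ℝ) * (A.card : ℝ)) ≤ (T.card : ℝ) := by
    rw [hTcard]
    push_cast
    calc ((L v).card : ℝ) * ((3 / 4 : ℝ) * (A.card : ℝ))
        = ∑ _c ∈ L v, (3 / 4 : ℝ) * (A.card : ℝ) := by
          rw [Finset.sum_const, nsmul_eq_mul]
      _ ≤ ∑ c ∈ L v, ((Ac c).card : ℝ) := Finset.sum_le_sum (fun c hc => key c hc)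
  have hlast : ((L v).card : ℝ) / 2 * (A.card : ℝ)
      ≤ ((L v).card : ℝ) * ((3 / 4 : ℝ) * (A.card : ℝ)) := by
    have h0 : (0 : ℝ) ≤ ((L v).card : ℝ) := Nat.cast_nonneg _
    have h1 : (0 : ℝ) ≤ (A.card : ℝ) := Nat.cast_nonneg _
    nlinarith
  linarith

/-- **Finishing lemma for correspondence coloring.**  A correspondence assignment is
modelled by a list assignment `L` together with a symmetric relation `M` on pairs
`(vertex, color)` supported on edges of `G`, which is a matching on each edge.
If `|L(v)| ≥ 8D` for every vertex `v` and the maximum color degree satisfies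
`Δ(G, (L, M)) ≤ D` for a positive real `D`, then `G` is `(L, M)`-colorable. -/
theorem finishing_lemma_correspondence (V : Type) [Fintype V] [DecidableEq V]
    (G : SimpleGraph V) [DecidableRel G.Adj] (L : V → Finset ℕ)
    (M : V × ℕ → V × ℕ → Prop) [DecidableRel M] (D : ℝ) (hD : 0 < D)
    (hMsupp : ∀ q r, M q r → G.Adj q.1 r.1 ∧ q.2 ∈ L q.1 ∧ r.2 ∈ L r.1)
    (hMsymm : ∀ q r, M q r → M r q)
    (hMmatch : ∀ q r r', M q r → M q r' → r.1 = r'.1 → r.2 = r'.2)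
    (hL : ∀ v, 8 * D ≤ ((L v).card : ℝ))
    (hdeg : ∀ v, ∀ c ∈ L v,
      ((((G.neighborFinset v).filter fun u => ∃ c' ∈ L u, M (v, c) (u, c')).card : ℝ) ≤ D)) :
    ∃ φ : V → ℕ, (∀ v, φ v ∈ L v) ∧ ∀ u v, G.Adj u v → ¬ M (u, φ u) (v, φ v) := by
  classical
  have step := CS_step G L M D hD hMsupp hMsymm hMmatch hL hdeg
  have pos : ∀ S : Finset V, 0 < (CS V G L M S).card := by
    intro S
    induction S using Finset.induction_on with
    | empty =>
      apply Finset.card_pos.mpr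
      exact ⟨fun _ => 0, mem_CS.mpr ⟨by simp, by simp, fun _ _ => rfl⟩⟩
    | @insert a s ha IH =>
      have h1 := step s.card s rfl a ha
      have hLa : (0 : ℝ) < ((L a).card : ℝ) := lt_of_lt_of_le (by linarith) (hL a)
      have hN : (0 : ℝ) < ((CS V G L M s).card : ℝ) := by exact_mod_cast IH
      have h2 : (0 : ℝ) < ((CS V G L M (insert a s)).card : ℝ) :=
        lt_of_lt_of_le (by positivity) h1
      exact_mod_cast h2
  obtain ⟨φ, hφ⟩ := Finset.card_pos.mp (pos Finset.univ)
  obtain ⟨h1, h2, -⟩ := mem_CS.mp hφ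
  exact ⟨φ, fun v => h1 v (Finset.mem_univ v),
    fun u v hadj => h2 u (Finset.mem_univ u) v (Finset.mem_univ v) hadj⟩
end

section
/- Under the standing setup (nearly disjoint finite graphs G₁, …, G_m with union G; every vertex of G in exactly C of the graphs; a list assignment L with |L(v)| = Λ for all v and d_{G_i, L}(v, c) = D for every i ∈ [m], v ∈ V(G_i), c ∈ L(v); and the random pair (A, ψ) where each vertex lies in A independently with probability p ∈ [0, 1] and ψ(v) is chosen uniformly and independently from L(v)), the following hold: (1) for every i ∈ [m], v ∈ V(G_i) and c ∈ L(v), the probability that no u ∈ N_{G_i}(v) ∩ A satisfies ψ(u) = c equals (1 − p/Λ)^D; and (2) for every v ∈ V(G) and c ∈ L(v), the probability that c ∈ L_{A,ψ}(v) equals (1 − p/Λ)^{DC}. -/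
open Finset

/-- The weight of an outcome `(A, ψ)` in the product space where each vertex lies in `A`
independently with probability `p` and colors are chosen uniformly from the lists. -/
noncomputable def outcomeWeight {V : Type} [Fintype V] [DecidableEq V]
    (L : V → Finset ℕ) (p : ℝ) (A : Finset V) : ℝ :=
  p ^ A.card * (1 - p) ^ (Fintype.card V - A.card) * ∏ v : V, ((L v).card : ℝ)⁻¹

open Classical in
/-- The probability of an event `E` of outcomes `(A, ψ)`, where `A ⊆ V` contains each
vertex independently with probability `p` and, independently, `ψ v` is uniform in `L v`. -/
noncomputable def prEvent {V : Type} [Fintype V] [DecidableEq V]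
    (L : V → Finset ℕ) (p : ℝ) (E : Finset V → (V → ℕ) → Prop) : ℝ :=
  ∑ A : Finset V, ∑ ψ ∈ Fintype.piFinset (fun v => L v),
    if E A ψ then outcomeWeight L p A else 0

open Classical in
/-- `L_{A,ψ}(v) = L(v) \ {ψ(u) : u ∈ N_G(v) ∩ A}`. -/
noncomputable def keptList {V : Type} [Fintype V] [DecidableEq V] (Gu : SimpleGraph V)
    (L : V → Finset ℕ) (A : Finset V) (ψ : V → ℕ) (v : V) : Finset ℕ :=
  (L v).filter fun c => ∀ u, Gu.Adj v u → u ∈ A → ψ u ≠ c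

open Classical in
lemma prEvent_congr {V : Type} [Fintype V] [DecidableEq V] (L : V → Finset ℕ) (p : ℝ)
    (E E' : Finset V → (V → ℕ) → Prop)
    (h : ∀ A ψ, ψ ∈ Fintype.piFinset (fun v => L v) → (E A ψ ↔ E' A ψ)) :
    prEvent L p E = prEvent L p E' := by
  unfold prEvent
  refine Finset.sum_congr rfl fun A _ => Finset.sum_congr rfl fun ψ hψ => ?_
  exact if_congr (h A ψ hψ) rfl rfl

set_option maxHeartbeats 1600000 in
open Classical in
/-- The key computation: the probability that no `u ∈ T` has `u ∈ A` and `ψ u = c`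
is `(1 - p/Λ)^|T|`, when `c ∈ L u` for every `u ∈ T`. -/
lemma prEvent_forall_ne {V : Type} [Fintype V] [DecidableEq V] (L : V → Finset ℕ)
    (Λ : ℕ) (hΛ : 0 < Λ) (hsize : ∀ v, (L v).card = Λ) (p : ℝ)
    (T : Finset V) (c : ℕ) (hc : ∀ u ∈ T, c ∈ L u) :
    prEvent L p (fun A ψ => ∀ u ∈ T, u ∈ A → ψ u ≠ c) = (1 - p / (Λ : ℝ)) ^ T.card := by
  have hΛ0 : ((Λ : ℝ)) ≠ 0 := Nat.cast_ne_zero.mpr hΛ.ne'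
  unfold prEvent outcomeWeight
  have step1 : ∀ A : Finset V,
      (∑ ψ ∈ Fintype.piFinset (fun v => L v),
        if (∀ u ∈ T, u ∈ A → ψ u ≠ c) then
          p ^ A.card * (1 - p) ^ (Fintype.card V - A.card) * ∏ v : V, ((L v).card : ℝ)⁻¹
        else 0)
      = p ^ A.card * (1 - p) ^ (Fintype.card V - A.card)
          * (1 - (Λ : ℝ)⁻¹) ^ (T ∩ A).card := by
    intro A
    set P : ℝ := p ^ A.card * (1 - p) ^ (Fintype.card V - A.card) with hP
    have h1 : ∀ ψ : V → ℕ,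
        (if (∀ u ∈ T, u ∈ A → ψ u ≠ c) then (∏ v : V, ((L v).card : ℝ)⁻¹) else 0)
        = ∏ v : V, (((L v).card : ℝ)⁻¹ * if v ∈ T ∧ v ∈ A ∧ ψ v = c then 0 else 1) := by
      intro ψ
      by_cases hE : ∀ u ∈ T, u ∈ A → ψ u ≠ c
      · rw [if_pos hE]
        refine Finset.prod_congr rfl fun v _ => ?_
        rw [if_neg, mul_one]
        rintro ⟨h1, h2, h3⟩; exact hE v h1 h2 h3
      · rw [if_neg hE]
        push_neg at hE
        obtain ⟨u, hu1, hu2, hu3⟩ := hE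
        refine (Finset.prod_eq_zero (Finset.mem_univ u) ?_).symm
        rw [if_pos ⟨hu1, hu2, hu3⟩, mul_zero]
    have h2 : ∀ v : V,
        (∑ x ∈ L v, (((L v).card : ℝ)⁻¹ * if v ∈ T ∧ v ∈ A ∧ x = c then 0 else 1))
        = if v ∈ T ∩ A then 1 - (Λ : ℝ)⁻¹ else 1 := by
      intro v
      by_cases hv : v ∈ T ∧ v ∈ A
      · rw [if_pos (Finset.mem_inter.mpr hv)]
        have hrw : ∀ x ∈ L v,
            (((L v).card : ℝ)⁻¹ * if v ∈ T ∧ v ∈ A ∧ x = c then 0 else 1)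
            = (Λ : ℝ)⁻¹ - (if x = c then (Λ : ℝ)⁻¹ else 0) := by
          intro x hx
          rcases eq_or_ne x c with rfl | hxc
          · rw [if_pos ⟨hv.1, hv.2, rfl⟩, if_pos rfl, mul_zero, sub_self]
          · rw [if_neg (by tauto), if_neg hxc, mul_one, hsize, sub_zero]
        rw [Finset.sum_congr rfl hrw, Finset.sum_sub_distrib, Finset.sum_const,
          Finset.sum_ite_eq' (L v) c (fun _ => (Λ : ℝ)⁻¹), if_pos (hc v hv.1), hsize]
        rw [nsmul_eq_mul, mul_inv_cancel₀ hΛ0]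
      · rw [if_neg (fun h => hv ⟨(Finset.mem_inter.mp h).1, (Finset.mem_inter.mp h).2⟩)]
        have hrw : ∀ x ∈ L v,
            (((L v).card : ℝ)⁻¹ * if v ∈ T ∧ v ∈ A ∧ x = c then 0 else 1) = (Λ : ℝ)⁻¹ := by
          intro x hx
          rw [if_neg (fun h => hv ⟨h.1, h.2.1⟩), mul_one, hsize]
        rw [Finset.sum_congr rfl hrw, Finset.sum_const, hsize, nsmul_eq_mul,
          mul_inv_cancel₀ hΛ0]
    calc (∑ ψ ∈ Fintype.piFinset (fun v => L v),
          if (∀ u ∈ T, u ∈ A → ψ u ≠ c) then P * ∏ v : V, ((L v).card : ℝ)⁻¹ else 0)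
        = ∑ ψ ∈ Fintype.piFinset (fun v => L v),
            P * (if (∀ u ∈ T, u ∈ A → ψ u ≠ c) then ∏ v : V, ((L v).card : ℝ)⁻¹ else 0) := by
          refine Finset.sum_congr rfl fun ψ _ => ?_
          rw [mul_ite, mul_zero]
      _ = P * ∑ ψ ∈ Fintype.piFinset (fun v => L v),
            ∏ v : V, (((L v).card : ℝ)⁻¹ * if v ∈ T ∧ v ∈ A ∧ ψ v = c then 0 else 1) := by
          rw [← Finset.mul_sum]
          congr 1
          exact Finset.sum_congr rfl fun ψ _ => h1 ψ
      _ = P * ∏ v : V,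
            ∑ x ∈ L v, (((L v).card : ℝ)⁻¹ * if v ∈ T ∧ v ∈ A ∧ x = c then 0 else 1) := by
          rw [Finset.prod_univ_sum]
      _ = P * ∏ v : V, (if v ∈ T ∩ A then 1 - (Λ : ℝ)⁻¹ else 1) := by
          rw [Finset.prod_congr rfl fun v _ => h2 v]
      _ = P * (1 - (Λ : ℝ)⁻¹) ^ (T ∩ A).card := by
          rw [Finset.prod_ite_mem, Finset.univ_inter, Finset.prod_const]
  have main : (∑ A : Finset V,
      p ^ A.card * (1 - p) ^ (Fintype.card V - A.card) * (1 - (Λ : ℝ)⁻¹) ^ (T ∩ A).card)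
      = (1 - p / (Λ : ℝ)) ^ T.card := by
    have step2 : ∀ A : Finset V,
        p ^ A.card * (1 - p) ^ (Fintype.card V - A.card) * (1 - (Λ : ℝ)⁻¹) ^ (T ∩ A).card
        = (∏ v ∈ A, (p * if v ∈ T then 1 - (Λ : ℝ)⁻¹ else 1)) * ∏ v ∈ univ \ A, (1 - p) := by
      intro A
      rw [Finset.prod_mul_distrib, Finset.prod_const, Finset.prod_ite_mem,
        Finset.prod_const, Finset.prod_const, Finset.card_sdiff_of_subset (Finset.subset_univ A), Finset.card_univ,
        Finset.inter_comm]
      ring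
    rw [Finset.sum_congr rfl fun A _ => step2 A]
    have hpa := (Finset.prod_add (fun v : V => p * if v ∈ T then 1 - (Λ : ℝ)⁻¹ else 1)
      (fun _ : V => 1 - p) univ).symm
    rw [Finset.powerset_univ] at hpa
    rw [hpa]
    have h3 : ∀ v : V,
        ((p * if v ∈ T then 1 - (Λ : ℝ)⁻¹ else 1) + (1 - p))
        = if v ∈ T then 1 - p / (Λ : ℝ) else 1 := by
      intro v
      by_cases hv : v ∈ T
      · rw [if_pos hv, if_pos hv]
        field_simp
        ring
      · rw [if_neg hv, if_neg hv]; ring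
    rw [Finset.prod_congr rfl fun v _ => h3 v, Finset.prod_ite_mem, Finset.univ_inter,
      Finset.prod_const]
  beta_reduce
  refine Eq.trans (Finset.sum_congr rfl fun A _ => ?_) main
  exact Eq.trans (Finset.sum_congr rfl fun ψ _ => @if_congr ℝ _ _ (Classical.propDecidable _) _ _ _ _ _ Iff.rfl rfl rfl) (step1 A)

/-- **Keep probabilities.**  Under the standing setup (nearly disjoint graphs `Gᵢ` with
vertex sets `S i`, every vertex in exactly `C` of them, all lists of size `Λ`, all color
degrees exactly `D`): (1) the probability that no activated neighbor `u ∈ N_{Gᵢ}(v) ∩ A`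
has `ψ u = c` is `(1 - p/Λ)^D`; (2) the probability that `c ∈ L_{A,ψ}(v)` is
`(1 - p/Λ)^{DC}`. -/
theorem keep_probability (C Λ D : ℕ) (hC : 0 < C) (hΛ : 0 < Λ) (hD : 0 < D)
    (V : Type) [Fintype V] [DecidableEq V] (m : ℕ) (G : Fin m → SimpleGraph V)
    [∀ i, DecidableRel (G i).Adj] (S : Fin m → Finset V) (L : V → Finset ℕ) (p : ℝ)
    (hp0 : 0 ≤ p) (hp1 : p ≤ 1)
    (hsupp : ∀ i u v, (G i).Adj u v → u ∈ S i ∧ v ∈ S i)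
    (hnd : ∀ i j, i ≠ j → (S i ∩ S j).card ≤ 1)
    (hcount : ∀ v : V, (univ.filter fun i => v ∈ S i).card = C)
    (hsize : ∀ v : V, (L v).card = Λ)
    (hdeg : ∀ i, ∀ v ∈ S i, ∀ c ∈ L v,
      (((G i).neighborFinset v).filter fun u => c ∈ L u).card = D) :
    (∀ i : Fin m, ∀ v ∈ S i, ∀ c ∈ L v,
      prEvent L p (fun A ψ => ∀ u, (G i).Adj v u → u ∈ A → ψ u ≠ c)
        = (1 - p / (Λ : ℝ)) ^ D) ∧
    (∀ v : V, ∀ c ∈ L v,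
      prEvent L p (fun A ψ => c ∈ keptList (⨆ i, G i) L A ψ v)
        = (1 - p / (Λ : ℝ)) ^ (D * C)) := by
  classical
  constructor
  · intro i v hv c hcl
    set T : Finset V := ((G i).neighborFinset v).filter fun u => c ∈ L u with hT
    have hcT : ∀ u ∈ T, c ∈ L u := fun u hu => (Finset.mem_filter.mp hu).2
    have hequiv : ∀ (A : Finset V) (ψ : V → ℕ), ψ ∈ Fintype.piFinset (fun v => L v) →
        ((∀ u, (G i).Adj v u → u ∈ A → ψ u ≠ c) ↔ (∀ u ∈ T, u ∈ A → ψ u ≠ c)) := by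
      intro A ψ hψ
      constructor
      · intro h u hu hA
        exact h u ((SimpleGraph.mem_neighborFinset _ _ _).mp (Finset.mem_filter.mp hu).1) hA
      · intro h u hadj hA hψu
        by_cases hcu : c ∈ L u
        · exact h u (Finset.mem_filter.mpr ⟨(SimpleGraph.mem_neighborFinset _ _ _).mpr hadj,
            hcu⟩) hA hψu
        · exact hcu (hψu ▸ (Fintype.mem_piFinset.mp hψ u))
    rw [prEvent_congr L p _ _ hequiv, prEvent_forall_ne L Λ hΛ hsize p T c hcT,
      hdeg i v hv c hcl]
  · intro v c hcl
    set T : Finset V := univ.filter fun u => (∃ i, (G i).Adj v u) ∧ c ∈ L u with hT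
    have hcT : ∀ u ∈ T, c ∈ L u := fun u hu => (Finset.mem_filter.mp hu).2.2
    have hequiv : ∀ (A : Finset V) (ψ : V → ℕ), ψ ∈ Fintype.piFinset (fun v => L v) →
        ((c ∈ keptList (⨆ i, G i) L A ψ v) ↔ (∀ u ∈ T, u ∈ A → ψ u ≠ c)) := by
      intro A ψ hψ
      unfold keptList
      rw [Finset.mem_filter]
      constructor
      · intro h u hu hA
        obtain ⟨i, hadj⟩ := (Finset.mem_filter.mp hu).2.1
        exact h.2 u ((SimpleGraph.iSup_adj).mpr ⟨i, hadj⟩) hA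
      · intro h
        refine ⟨hcl, fun u hadj hA hψu => ?_⟩
        obtain ⟨i, hadj⟩ := (SimpleGraph.iSup_adj).mp hadj
        by_cases hcu : c ∈ L u
        · exact h u (Finset.mem_filter.mpr ⟨Finset.mem_univ u, ⟨i, hadj⟩, hcu⟩) hA hψu
        · exact hcu (hψu ▸ (Fintype.mem_piFinset.mp hψ u))
    rw [prEvent_congr L p _ _ hequiv, prEvent_forall_ne L Λ hΛ hsize p T c hcT]
    congr 1
    -- |T| = D * C
    have hTeq : T = (univ.filter fun i => v ∈ S i).biUnion
        (fun i => ((G i).neighborFinset v).filter fun u => c ∈ L u) := by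
      ext u
      simp only [hT, Finset.mem_filter, Finset.mem_biUnion, Finset.mem_univ, true_and,
        SimpleGraph.mem_neighborFinset]
      constructor
      · rintro ⟨⟨i, hadj⟩, hcu⟩
        exact ⟨i, (hsupp i v u hadj).1, hadj, hcu⟩
      · rintro ⟨i, _, hadj, hcu⟩
        exact ⟨⟨i, hadj⟩, hcu⟩
    have hdisj : ∀ i ∈ univ.filter fun i => v ∈ S i, ∀ j ∈ univ.filter fun i => v ∈ S i,
        i ≠ j → Disjoint (((G i).neighborFinset v).filter fun u => c ∈ L u)
          (((G j).neighborFinset v).filter fun u => c ∈ L u) := by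
      intro i _ j _ hij
      rw [Finset.disjoint_left]
      intro u hui huj
      have hadji : (G i).Adj v u := (SimpleGraph.mem_neighborFinset _ _ _).mp
        (Finset.mem_filter.mp hui).1
      have hadjj : (G j).Adj v u := (SimpleGraph.mem_neighborFinset _ _ _).mp
        (Finset.mem_filter.mp huj).1
      have huv : u ≠ v := fun h => (G i).irrefl (h ▸ hadji)
      have hu_mem : u ∈ S i ∩ S j := Finset.mem_inter.mpr
        ⟨(hsupp i v u hadji).2, (hsupp j v u hadjj).2⟩
      have hv_mem : v ∈ S i ∩ S j := Finset.mem_inter.mpr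
        ⟨(hsupp i v u hadji).1, (hsupp j v u hadjj).1⟩
      exact huv (Finset.card_le_one.mp (hnd i j hij) u hu_mem v hv_mem)
    rw [hTeq, Finset.card_biUnion hdisj]
    have hDcard : ∀ i ∈ univ.filter fun i => v ∈ S i,
        (((G i).neighborFinset v).filter fun u => c ∈ L u).card = D := by
      intro i hi
      exact hdeg i v (Finset.mem_filter.mp hi).2 c hcl
    rw [Finset.sum_congr rfl hDcard, Finset.sum_const, hcount v, smul_eq_mul, mul_comm]
end

section
/- Under the standing setup (nearly disjoint finite graphs G₁, …, G_m with union G; every vertex of G in exactly C of the graphs; a list assignment L with |L(v)| = Λ for all v and d_{G_i, L}(v, c) = D for every i ∈ [m], v ∈ V(G_i), c ∈ L(v); and the random pair (A, ψ) where each vertex lies in A independently with probability p ∈ [0, 1] and ψ(v) is chosen uniformly and independently from L(v)), every vertex v ∈ V(G) satisfies E[R_v] = (1 − p/Λ)^{DC} Λ; moreover, for every i ∈ [m], v ∈ V(G_i) and c ∈ L(v), E[U_{v,c,i}] = p(1 − (1 − p/Λ)^{DC}) D and E[K_{v,c,i}] = (1 − p)(1 − p/Λ)^{D(C−1)} D.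 -/
open Finset

open Classical in
/-- The expectation of a random variable `X` of outcomes `(A, ψ)`, where `A ⊆ V` contains
each vertex independently with probability `p` and, independently, `ψ v` is uniform in
`L v`. -/
noncomputable def expVal {V : Type} [Fintype V] [DecidableEq V]
    (L : V → Finset ℕ) (p : ℝ) (X : Finset V → (V → ℕ) → ℝ) : ℝ :=
  ∑ A : Finset V, ∑ ψ ∈ Fintype.piFinset (fun v => L v),
    X A ψ * (p ^ A.card * (1 - p) ^ (Fintype.card V - A.card) * ∏ v : V, ((L v).card : ℝ)⁻¹)

open Classical in
/-- `X_{A,ψ} = {v ∈ A : ψ(v) ∈ L_{A,ψ}(v)}`. -/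
noncomputable def keptSet {V : Type} [Fintype V] [DecidableEq V] (Gu : SimpleGraph V)
    (L : V → Finset ℕ) (A : Finset V) (ψ : V → ℕ) : Finset V :=
  A.filter fun v => ψ v ∈ keptList Gu L A ψ v

section Helpers

variable {V : Type} [Fintype V] [DecidableEq V]

lemma expVal_congr (L : V → Finset ℕ) (p : ℝ) {X Y : Finset V → (V → ℕ) → ℝ}
    (h : ∀ A ψ, ψ ∈ Fintype.piFinset (fun v => L v) → X A ψ = Y A ψ) :
    expVal L p X = expVal L p Y := by
  unfold expVal
  exact Finset.sum_congr rfl fun A _ => Finset.sum_congr rfl fun ψ hψ => by rw [h A ψ hψ]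

lemma expVal_sum (L : V → Finset ℕ) (p : ℝ) {κ : Type} (s : Finset κ)
    (F : κ → Finset V → (V → ℕ) → ℝ) :
    expVal L p (fun A ψ => ∑ x ∈ s, F x A ψ)
      = ∑ x ∈ s, expVal L p (fun A ψ => F x A ψ) := by
  unfold expVal
  simp only [Finset.sum_mul]
  exact Eq.trans (Finset.sum_congr rfl fun A _ => Finset.sum_comm) Finset.sum_comm

lemma expVal_sub (L : V → Finset ℕ) (p : ℝ) (X Y : Finset V → (V → ℕ) → ℝ) :
    expVal L p (fun A ψ => X A ψ - Y A ψ) = expVal L p X - expVal L p Y := by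
  unfold expVal
  simp only [sub_mul, Finset.sum_sub_distrib]

/-- The master factorization lemma. -/
lemma expVal_master (L : V → Finset ℕ) (p : ℝ) (gT gF : V → ℕ → ℝ) :
    expVal L p (fun A ψ => ∏ u : V, if u ∈ A then gT u (ψ u) else gF u (ψ u))
      = ∏ u : V, ((p * ∑ x ∈ L u, gT u x + (1 - p) * ∑ x ∈ L u, gF u x)
          * ((L u).card : ℝ)⁻¹) := by
  unfold expVal
  have hinner : ∀ A : Finset V,
      (∑ ψ ∈ Fintype.piFinset (fun v => L v),
        (∏ u : V, if u ∈ A then gT u (ψ u) else gF u (ψ u)) *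
          (p ^ A.card * (1 - p) ^ (Fintype.card V - A.card) * ∏ v : V, ((L v).card : ℝ)⁻¹))
      = ∏ u : V, (if u ∈ A then p * (∑ x ∈ L u, gT u x) * ((L u).card : ℝ)⁻¹
          else (1 - p) * (∑ x ∈ L u, gF u x) * ((L u).card : ℝ)⁻¹) := by
    intro A
    have hw : p ^ A.card * (1 - p) ^ (Fintype.card V - A.card)
        = ∏ u : V, (if u ∈ A then p else 1 - p) := by
      rw [Finset.prod_ite (fun _ => p) (fun _ => 1 - p), Finset.prod_const, Finset.prod_const]
      congr 2
      · rw [Finset.filter_mem_eq_inter, Finset.univ_inter]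
      · rw [← Finset.card_compl]
        congr 1
        ext u
        simp
    have hterm : ∀ ψ : V → ℕ,
        (∏ u : V, if u ∈ A then gT u (ψ u) else gF u (ψ u)) *
          (p ^ A.card * (1 - p) ^ (Fintype.card V - A.card) * ∏ v : V, ((L v).card : ℝ)⁻¹)
        = ∏ u : V, ((if u ∈ A then p * gT u (ψ u) else (1 - p) * gF u (ψ u))
            * ((L u).card : ℝ)⁻¹) := by
      intro ψ
      rw [hw, ← Finset.prod_mul_distrib, ← Finset.prod_mul_distrib]
      refine Finset.prod_congr rfl fun u _ => ?_
      by_cases hu : u ∈ A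
      · simp only [hu, if_true]; ring
      · simp only [hu, if_false]; ring
    rw [Finset.sum_congr rfl fun ψ _ => hterm ψ, ← Finset.prod_univ_sum (fun v => L v)
      (fun u y => (if u ∈ A then p * gT u y else (1 - p) * gF u y) * ((L u).card : ℝ)⁻¹)]
    refine Finset.prod_congr rfl fun u _ => ?_
    rw [← Finset.sum_mul]
    by_cases hu : u ∈ A
    · simp only [hu, if_true]
      rw [← Finset.mul_sum]
    · simp only [hu, if_false]
      rw [← Finset.mul_sum]
  rw [Finset.sum_congr rfl fun A _ => hinner A]
  have hrhs : ∀ u : V,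
      (p * ∑ x ∈ L u, gT u x + (1 - p) * ∑ x ∈ L u, gF u x) * ((L u).card : ℝ)⁻¹
      = p * (∑ x ∈ L u, gT u x) * ((L u).card : ℝ)⁻¹
        + (1 - p) * (∑ x ∈ L u, gF u x) * ((L u).card : ℝ)⁻¹ := fun u => by ring
  rw [Finset.prod_congr rfl fun u _ => hrhs u, Finset.prod_add]
  rw [Finset.powerset_univ]
  refine Finset.sum_congr rfl fun A _ => ?_
  rw [Finset.prod_ite]
  congr 1
  · congr 1
    rw [Finset.filter_mem_eq_inter, Finset.univ_inter]
  · congr 1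
    ext u
    simp

lemma ind_forall (A : Finset V) (Q : V → Prop) [DecidablePred Q] :
    (if ∀ w ∈ A, ¬ Q w then (1:ℝ) else 0)
      = ∏ w : V, if w ∈ A then (if Q w then (0:ℝ) else 1) else 1 := by
  by_cases h : ∀ w ∈ A, ¬ Q w
  · rw [if_pos h]
    refine (Finset.prod_eq_one fun w _ => ?_).symm
    by_cases hw : w ∈ A
    · rw [if_pos hw, if_neg (h w hw)]
    · rw [if_neg hw]
  · rw [if_neg h]
    push_neg at h
    obtain ⟨w, hwA, hQ⟩ := h
    refine (Finset.prod_eq_zero (Finset.mem_univ w) ?_).symm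
    rw [if_pos hwA, if_pos hQ]

lemma ind_mem (A : Finset V) (u : V) :
    (if u ∈ A then (1:ℝ) else 0)
      = ∏ w : V, if w ∈ A then (1:ℝ) else (if w = u then 0 else 1) := by
  by_cases hu : u ∈ A
  · rw [if_pos hu]
    refine (Finset.prod_eq_one fun w _ => ?_).symm
    by_cases hw : w ∈ A
    · rw [if_pos hw]
    · rw [if_neg hw, if_neg (fun e : w = u => hw (e ▸ hu))]
  · rw [if_neg hu]
    refine (Finset.prod_eq_zero (Finset.mem_univ u) ?_).symm
    rw [if_neg hu, if_pos rfl]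

lemma ind_mem_forall (A : Finset V) (u : V) (f : V → Prop) [DecidablePred f]
    (Q : V → Prop) [DecidablePred Q] (hQu : ¬ Q u) :
    (if u ∈ A ∧ f u ∧ ∀ w ∈ A, ¬ Q w then (1:ℝ) else 0)
      = ∏ w : V, if w ∈ A
          then (if w = u then (if f w then (1:ℝ) else 0) else 1) * (if Q w then 0 else 1)
          else (if w = u then 0 else 1) := by
  by_cases hu : u ∈ A
  · by_cases hP : f u
    · by_cases h : ∀ w ∈ A, ¬ Q w
      · rw [if_pos ⟨hu, hP, h⟩]
        refine (Finset.prod_eq_one fun w _ => ?_).symm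
        by_cases hw : w ∈ A
        · rw [if_pos hw, if_neg (h w hw), mul_one]
          by_cases hwu : w = u
          · subst hwu; rw [if_pos rfl, if_pos hP]
          · rw [if_neg hwu]
        · rw [if_neg hw, if_neg (fun e : w = u => hw (e ▸ hu))]
      · rw [if_neg (fun hh => h hh.2.2)]
        push_neg at h
        obtain ⟨w, hwA, hQ⟩ := h
        refine (Finset.prod_eq_zero (Finset.mem_univ w) ?_).symm
        rw [if_pos hwA, if_pos hQ, mul_zero]
    · rw [if_neg (fun hh => hP hh.2.1)]
      refine (Finset.prod_eq_zero (Finset.mem_univ u) ?_).symm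
      rw [if_pos hu, if_pos rfl, if_neg hP, zero_mul]
  · rw [if_neg (fun hh => hu hh.1)]
    refine (Finset.prod_eq_zero (Finset.mem_univ u) ?_).symm
    rw [if_neg hu, if_pos rfl]

lemma ind_notmem_forall (A : Finset V) (u : V)
    (Q : V → Prop) [DecidablePred Q] (hQu : ¬ Q u) :
    (if u ∉ A ∧ ∀ w ∈ A, ¬ Q w then (1:ℝ) else 0)
      = ∏ w : V, if w ∈ A
          then (if w = u then (0:ℝ) else 1) * (if Q w then 0 else 1)
          else 1 := by
  by_cases hu : u ∈ A
  · rw [if_neg (fun hh => hh.1 hu)]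
    refine (Finset.prod_eq_zero (Finset.mem_univ u) ?_).symm
    rw [if_pos hu, if_pos rfl, zero_mul]
  · by_cases h : ∀ w ∈ A, ¬ Q w
    · rw [if_pos ⟨hu, h⟩]
      refine (Finset.prod_eq_one fun w _ => ?_).symm
      by_cases hw : w ∈ A
      · rw [if_pos hw, if_neg (fun e : w = u => hu (e ▸ hw)), one_mul, if_neg (h w hw)]
      · rw [if_neg hw]
    · rw [if_neg (fun hh => h hh.2)]
      push_neg at h
      obtain ⟨w, hwA, hQ⟩ := h
      refine (Finset.prod_eq_zero (Finset.mem_univ w) ?_).symm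
      rw [if_pos hwA, if_pos hQ, mul_zero]

lemma sum_avoid (s : Finset ℕ) (Q : Prop) [Decidable Q] (c : ℕ) :
    ∑ x ∈ s, (if Q ∧ x = c then (0:ℝ) else 1)
      = (s.card : ℝ) - (if Q ∧ c ∈ s then (1:ℝ) else 0) := by
  have h1 : ∀ x ∈ s, (if Q ∧ x = c then (0:ℝ) else 1)
      = 1 - (if Q ∧ x = c then (1:ℝ) else 0) := by
    intro x _
    by_cases h : Q ∧ x = c
    · rw [if_pos h, if_pos h]; norm_num
    · rw [if_neg h, if_neg h]; norm_num
  rw [Finset.sum_congr rfl h1, Finset.sum_sub_distrib, Finset.sum_const, nsmul_eq_mul, mul_one]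
  congr 1
  by_cases hQ : Q
  · simp only [hQ, true_and]
    rw [Finset.sum_ite_eq' s c (fun _ => (1:ℝ))]
  · simp only [hQ, false_and, if_false, Finset.sum_const_zero]

lemma factor_eval {Λ : ℕ} (hΛ : 0 < Λ) (p : ℝ) (s : Finset ℕ) (hs : s.card = Λ)
    (Q : Prop) [Decidable Q] (c : ℕ) :
    (p * ∑ x ∈ s, (if Q ∧ x = c then (0:ℝ) else 1) + (1 - p) * ∑ x ∈ s, (1:ℝ))
        * ((s.card : ℝ))⁻¹
      = if Q ∧ c ∈ s then 1 - p / (Λ:ℝ) else 1 := by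
  have hΛ' : ((Λ:ℝ)) ≠ 0 := Nat.cast_ne_zero.2 hΛ.ne'
  rw [sum_avoid, Finset.sum_const, nsmul_eq_mul, mul_one, hs]
  by_cases h : Q ∧ c ∈ s
  · rw [if_pos h, if_pos h]
    field_simp
    ring
  · rw [if_neg h, if_neg h]
    field_simp
    ring

lemma prod_ite_pow (P : V → Prop) [DecidablePred P] (a : ℝ) :
    (∏ w : V, if P w then a else 1) = a ^ (Finset.univ.filter P).card := by
  rw [Finset.prod_ite, Finset.prod_const, Finset.prod_const_one, mul_one]

open Classical in
lemma union_colorDeg {C D : ℕ} {m : ℕ}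
    (G : Fin m → SimpleGraph V) [∀ i, DecidableRel (G i).Adj]
    (S : Fin m → Finset V) (L : V → Finset ℕ)
    (hsupp : ∀ i u v, (G i).Adj u v → u ∈ S i ∧ v ∈ S i)
    (hnd : ∀ i j, i ≠ j → (S i ∩ S j).card ≤ 1)
    (hcount : ∀ v : V, (Finset.univ.filter fun i => v ∈ S i).card = C)
    (hdeg : ∀ i, ∀ v ∈ S i, ∀ c ∈ L v,
      (((G i).neighborFinset v).filter fun u => c ∈ L u).card = D)
    (u : V) (c : ℕ) (hc : c ∈ L u) :
    (Finset.univ.filter fun w => (⨆ i, G i).Adj u w ∧ c ∈ L w).card = D * C := by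
  have hset : (Finset.univ.filter fun w => (⨆ i, G i).Adj u w ∧ c ∈ L w)
      = (Finset.univ.filter fun i => u ∈ S i).biUnion
          (fun i => ((G i).neighborFinset u).filter fun w => c ∈ L w) := by
    ext w
    simp only [Finset.mem_filter, Finset.mem_univ, true_and, Finset.mem_biUnion,
      SimpleGraph.iSup_adj, SimpleGraph.mem_neighborFinset]
    constructor
    · rintro ⟨⟨j, hj⟩, hcw⟩
      exact ⟨j, (hsupp j u w hj).1, hj, hcw⟩
    · rintro ⟨j, _, hj, hcw⟩
      exact ⟨⟨j, hj⟩, hcw⟩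
  rw [hset, Finset.card_biUnion]
  · rw [Finset.sum_congr rfl (fun i hi => hdeg i u (Finset.mem_filter.1 hi).2 c hc),
      Finset.sum_const, hcount, smul_eq_mul, mul_comm]
  · intro i hi j hj hij
    rw [Function.onFun, Finset.disjoint_left]
    intro w hwi hwj
    rw [Finset.mem_filter, SimpleGraph.mem_neighborFinset] at hwi hwj
    have h2 : ({u, w} : Finset V) ⊆ S i ∩ S j := by
      intro x hx
      rcases Finset.mem_insert.1 hx with rfl | hx
      · exact Finset.mem_inter.2 ⟨(hsupp i x w hwi.1).1, (hsupp j x w hwj.1).1⟩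
      · rw [Finset.mem_singleton] at hx
        subst hx
        exact Finset.mem_inter.2 ⟨(hsupp i u x hwi.1).2, (hsupp j u x hwj.1).2⟩
    have hne : u ≠ w := (hwi.1).ne
    have hcard := Finset.card_le_card h2
    rw [Finset.card_pair hne] at hcard
    have := hnd i j hij
    omega

open Classical in
lemma union_colorDeg_out {C D : ℕ} (hC : 0 < C) {m : ℕ}
    (G : Fin m → SimpleGraph V) [∀ i, DecidableRel (G i).Adj]
    (S : Fin m → Finset V) (L : V → Finset ℕ)
    (hsupp : ∀ i u v, (G i).Adj u v → u ∈ S i ∧ v ∈ S i)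
    (hnd : ∀ i j, i ≠ j → (S i ∩ S j).card ≤ 1)
    (hcount : ∀ v : V, (Finset.univ.filter fun i => v ∈ S i).card = C)
    (hdeg : ∀ i, ∀ v ∈ S i, ∀ c ∈ L v,
      (((G i).neighborFinset v).filter fun u => c ∈ L u).card = D)
    (i : Fin m) (u : V) (hu : u ∈ S i) (c : ℕ) (hc : c ∈ L u) :
    (Finset.univ.filter fun w => ((⨆ j, G j).Adj u w ∧ c ∈ L w) ∧ w ∉ S i).card
      = D * (C - 1) := by
  have hT := union_colorDeg G S L hsupp hnd hcount hdeg u c hc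
  have hin : (Finset.univ.filter fun w => ((⨆ j, G j).Adj u w ∧ c ∈ L w) ∧ w ∈ S i)
      = ((G i).neighborFinset u).filter fun w => c ∈ L w := by
    ext w
    simp only [Finset.mem_filter, Finset.mem_univ, true_and, SimpleGraph.iSup_adj,
      SimpleGraph.mem_neighborFinset]
    constructor
    · rintro ⟨⟨⟨j, hj⟩, hcw⟩, hwS⟩
      refine ⟨?_, hcw⟩
      by_cases hji : j = i
      · exact hji ▸ hj
      · exfalso
        have h2 : ({u, w} : Finset V) ⊆ S j ∩ S i := by
          intro x hx
          rcases Finset.mem_insert.1 hx with rfl | hx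
          · exact Finset.mem_inter.2 ⟨(hsupp j x w hj).1, hu⟩
          · rw [Finset.mem_singleton] at hx
            subst hx
            exact Finset.mem_inter.2 ⟨(hsupp j u x hj).2, hwS⟩
        have hne : u ≠ w := hj.ne
        have hcard := Finset.card_le_card h2
        rw [Finset.card_pair hne] at hcard
        have := hnd j i hji
        omega
    · rintro ⟨hj, hcw⟩
      exact ⟨⟨⟨i, hj⟩, hcw⟩, (hsupp i u w hj).2⟩
  have hsplit := Finset.card_filter_add_card_filter_not
    (s := Finset.univ.filter fun w => (⨆ j, G j).Adj u w ∧ c ∈ L w)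
    (p := fun w => w ∈ S i)
  rw [Finset.filter_filter, Finset.filter_filter] at hsplit
  rw [hin, hdeg i u hu c hc, hT] at hsplit
  have hmul : D * C - D = D * (C - 1) := by
    cases C with
    | zero => omega
    | succ C' => simp [Nat.mul_succ]
  omega

end Helpers

open Classical in
/-- **Expectations of the key random variables.**  Under the standing setup (nearly
disjoint graphs `Gᵢ` with vertex sets `S i`, every vertex in exactly `C` of them, all
lists of size `Λ`, all color degrees exactly `D`):
`E[R_v] = (1 - p/Λ)^{DC} Λ`, `E[U_{v,c,i}] = p(1 - (1 - p/Λ)^{DC})D` and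
`E[K_{v,c,i}] = (1 - p)(1 - p/Λ)^{D(C-1)} D`. -/
theorem expectations_lemma (C Λ D : ℕ) (hC : 0 < C) (hΛ : 0 < Λ) (hD : 0 < D)
    (V : Type) [Fintype V] [DecidableEq V] (m : ℕ) (G : Fin m → SimpleGraph V)
    [∀ i, DecidableRel (G i).Adj] (S : Fin m → Finset V) (L : V → Finset ℕ) (p : ℝ)
    (hp0 : 0 ≤ p) (hp1 : p ≤ 1)
    (hsupp : ∀ i u v, (G i).Adj u v → u ∈ S i ∧ v ∈ S i)
    (hnd : ∀ i j, i ≠ j → (S i ∩ S j).card ≤ 1)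
    (hcount : ∀ v : V, (univ.filter fun i => v ∈ S i).card = C)
    (hsize : ∀ v : V, (L v).card = Λ)
    (hdeg : ∀ i, ∀ v ∈ S i, ∀ c ∈ L v,
      (((G i).neighborFinset v).filter fun u => c ∈ L u).card = D) :
    -- `E[R_v] = (1 - p/Λ)^{DC} Λ`
    (∀ v : V,
      expVal L p (fun A ψ => ((keptList (⨆ i, G i) L A ψ v).card : ℝ))
        = (1 - p / (Λ : ℝ)) ^ (D * C) * Λ) ∧
    -- `E[U_{v,c,i}] = p (1 - (1 - p/Λ)^{DC}) D`
    (∀ i : Fin m, ∀ v ∈ S i, ∀ c ∈ L v,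
      expVal L p (fun A ψ =>
          ((((G i).neighborFinset v).filter fun u =>
              c ∈ L u ∧ u ∈ A ∧ u ∉ keptSet (⨆ j, G j) L A ψ).card : ℝ))
        = p * (1 - (1 - p / (Λ : ℝ)) ^ (D * C)) * D) ∧
    -- `E[K_{v,c,i}] = (1 - p)(1 - p/Λ)^{D(C-1)} D`
    (∀ i : Fin m, ∀ v ∈ S i, ∀ c ∈ L v,
      expVal L p (fun A ψ =>
          ((((G i).neighborFinset v).filter fun u =>
              c ∈ L u ∧ u ∉ A ∧
                ¬∃ w, w ∈ A ∧ w ∉ S i ∧ ψ w = c ∧ (⨆ j, G j).Adj w u).card : ℝ))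
        = (1 - p) * (1 - p / (Λ : ℝ)) ^ (D * (C - 1)) * D) := by
  have hΛ0 : ((Λ:ℝ)) ≠ 0 := Nat.cast_ne_zero.2 hΛ.ne'
  refine ⟨?_, ?_, ?_⟩
  -- Part R
  · intro v
    have key : expVal L p (fun A ψ => ((keptList (⨆ i, G i) L A ψ v).card : ℝ))
        = expVal L p (fun A ψ => ∑ c ∈ L v, ∏ u : V,
            if u ∈ A then (if (⨆ i, G i).Adj v u ∧ ψ u = c then (0:ℝ) else 1) else 1) := by
      refine expVal_congr L p fun A ψ _ => ?_
      rw [keptList, Finset.card_filter, Nat.cast_sum]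
      refine Finset.sum_congr rfl fun c _ => ?_
      rw [← ind_forall A (fun u => (⨆ i, G i).Adj v u ∧ ψ u = c)]
      rw [Nat.cast_ite, Nat.cast_one, Nat.cast_zero]
      exact if_congr
        ⟨fun h w hw hq => h w hq.1 hw hq.2, fun h w ha hw he => h w hw ⟨ha, he⟩⟩ rfl rfl
    rw [key, expVal_sum]
    have heval : ∀ c ∈ L v,
        expVal L p (fun A ψ => ∏ u : V,
          if u ∈ A then (if (⨆ i, G i).Adj v u ∧ ψ u = c then (0:ℝ) else 1) else 1)
        = (1 - p / (Λ:ℝ)) ^ (D * C) := by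
      intro c hc
      refine ((expVal_master L p
        (fun u x => if (⨆ i, G i).Adj v u ∧ x = c then (0:ℝ) else 1)
        (fun _ _ => (1:ℝ))).trans ?_)
      refine Eq.trans (b := ∏ u : V, if (⨆ i, G i).Adj v u ∧ c ∈ L u
          then 1 - p / (Λ:ℝ) else 1) ?_ ?_
      · exact Finset.prod_congr rfl fun u _ =>
          factor_eval hΛ p (L u) (hsize u) ((⨆ i, G i).Adj v u) c
      · rw [prod_ite_pow, union_colorDeg G S L hsupp hnd hcount hdeg v c hc]
    rw [Finset.sum_congr rfl heval, Finset.sum_const, hsize v, nsmul_eq_mul, mul_comm]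
  -- Part U
  · intro i v hv c hc
    have hNcard : (((G i).neighborFinset v).filter fun u => c ∈ L u).card = D :=
      hdeg i v hv c hc
    have key : expVal L p (fun A ψ => ((((G i).neighborFinset v).filter fun u =>
          c ∈ L u ∧ u ∈ A ∧ u ∉ keptSet (⨆ j, G j) L A ψ).card : ℝ))
        = expVal L p (fun A ψ => ∑ u ∈ ((G i).neighborFinset v).filter fun u => c ∈ L u,
            ((∏ w : V, if w ∈ A then (1:ℝ) else (if w = u then 0 else 1))
            - ∑ c' ∈ L u, ∏ w : V,
                if w ∈ A then (if w = u then (if ψ w = c' then (1:ℝ) else 0) else 1) *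
                    (if (⨆ j, G j).Adj u w ∧ ψ w = c' then 0 else 1)
                  else (if w = u then 0 else 1))) := by
      refine expVal_congr L p fun A ψ hψ => ?_
      have hfilter : (((G i).neighborFinset v).filter fun u =>
            c ∈ L u ∧ u ∈ A ∧ u ∉ keptSet (⨆ j, G j) L A ψ)
          = (((G i).neighborFinset v).filter fun u => c ∈ L u).filter
              (fun u => u ∈ A ∧ u ∉ keptSet (⨆ j, G j) L A ψ) := by
        rw [Finset.filter_filter]
      rw [hfilter, Finset.card_filter, Nat.cast_sum]
      refine Finset.sum_congr rfl fun u hu => ?_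
      have hψu : ψ u ∈ L u := Fintype.mem_piFinset.1 hψ u
      rw [Nat.cast_ite, Nat.cast_one, Nat.cast_zero, ← ind_mem A u]
      have hterm : ∀ c' ∈ L u, (∏ w : V,
            if w ∈ A then (if w = u then (if ψ w = c' then (1:ℝ) else 0) else 1) *
                (if (⨆ j, G j).Adj u w ∧ ψ w = c' then 0 else 1)
              else (if w = u then 0 else 1))
          = if (u ∈ A ∧ ψ u = c' ∧ ∀ w ∈ A, ¬((⨆ j, G j).Adj u w ∧ ψ w = c'))
              then (1:ℝ) else 0 :=
        fun c' _ => (ind_mem_forall A u (fun w => ψ w = c')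
          (fun w => (⨆ j, G j).Adj u w ∧ ψ w = c')
          (fun h => (⨆ j, G j).irrefl h.1)).symm
      rw [Finset.sum_congr rfl hterm,
        Finset.sum_eq_single_of_mem (ψ u) hψu
          (fun c' _ hne => if_neg (fun h => hne h.2.1.symm))]
      have hiff : u ∈ keptSet (⨆ j, G j) L A ψ
          ↔ (u ∈ A ∧ ψ u = ψ u ∧ ∀ w ∈ A, ¬((⨆ j, G j).Adj u w ∧ ψ w = ψ u)) := by
        rw [keptSet, Finset.mem_filter, keptList, Finset.mem_filter]
        constructor
        · rintro ⟨hA, _, hall⟩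
          exact ⟨hA, rfl, fun w hw hq => hall w hq.1 hw hq.2⟩
        · rintro ⟨hA, _, hall⟩
          exact ⟨hA, hψu, fun w ha hw he => hall w hw ⟨ha, he⟩⟩
      rw [← if_congr hiff rfl rfl]
      have hXA : u ∈ keptSet (⨆ j, G j) L A ψ → u ∈ A := fun h => (Finset.mem_filter.1 h).1
      by_cases h1 : u ∈ A
      · by_cases h2 : u ∈ keptSet (⨆ j, G j) L A ψ
        · rw [if_neg (fun h => h.2 h2), if_pos h1, if_pos h2]; norm_num
        · rw [if_pos ⟨h1, h2⟩, if_pos h1, if_neg h2]; norm_num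
      · rw [if_neg (fun h => h1 h.1), if_neg h1, if_neg (fun h => h1 (hXA h))]; norm_num
    rw [key, expVal_sum]
    have hP1 : ∀ u : V, expVal L p (fun A ψ =>
        ∏ w : V, if w ∈ A then (1:ℝ) else (if w = u then 0 else 1)) = p := by
      intro u
      refine ((expVal_master L p (fun _ _ => (1:ℝ))
        (fun w _ => if w = u then (0:ℝ) else 1)).trans ?_)
      rw [Finset.prod_eq_single u
        (fun b _ hb => by
          simp only [if_neg hb, Finset.sum_const, nsmul_eq_mul, mul_one]
          rw [hsize b]
          field_simp
          ring)
        (fun h => absurd (Finset.mem_univ u) h)]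
      simp only [if_pos rfl, Finset.sum_const, Finset.sum_const_zero, nsmul_eq_mul,
        mul_one, mul_zero, add_zero]
      rw [hsize u]
      field_simp
      simp
    have hP2 : ∀ u ∈ ((G i).neighborFinset v).filter fun u => c ∈ L u,
        ∀ c' ∈ L u, expVal L p (fun A ψ => ∏ w : V,
          if w ∈ A then (if w = u then (if ψ w = c' then (1:ℝ) else 0) else 1) *
              (if (⨆ j, G j).Adj u w ∧ ψ w = c' then 0 else 1)
            else (if w = u then 0 else 1))
        = p * (Λ:ℝ)⁻¹ * (1 - p / (Λ:ℝ)) ^ (D * C) := by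
      intro u hu c' hc'
      refine ((expVal_master L p
        (fun w x => (if w = u then (if x = c' then (1:ℝ) else 0) else 1) *
          (if (⨆ j, G j).Adj u w ∧ x = c' then 0 else 1))
        (fun w _ => if w = u then (0:ℝ) else 1)).trans ?_)
      rw [← Finset.mul_prod_erase Finset.univ _ (Finset.mem_univ u)]
      have hfu : (p * ∑ x ∈ L u, ((if u = u then (if x = c' then (1:ℝ) else 0) else 1) *
            (if (⨆ j, G j).Adj u u ∧ x = c' then 0 else 1))
          + (1 - p) * ∑ x ∈ L u, (if u = u then (0:ℝ) else 1)) * ((L u).card : ℝ)⁻¹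
          = p * (Λ:ℝ)⁻¹ := by
        have h1 : ∀ x ∈ L u, ((if u = u then (if x = c' then (1:ℝ) else 0) else 1) *
            (if (⨆ j, G j).Adj u u ∧ x = c' then 0 else 1))
            = (if x = c' then (1:ℝ) else 0) := by
          intro x _
          rw [if_pos (show u = u from rfl),
            if_neg (show ¬((⨆ j, G j).Adj u u ∧ x = c') from fun h => (⨆ j, G j).irrefl h.1),
            mul_one]
        rw [Finset.sum_congr rfl h1, Finset.sum_ite_eq' (L u) c' (fun _ => (1:ℝ)),
          if_pos hc', Finset.sum_congr rfl (fun x _ => if_pos rfl),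
          Finset.sum_const_zero, hsize u]
        ring
      rw [hfu]
      have hrest : (∏ w ∈ Finset.univ.erase u,
          ((p * ∑ x ∈ L w, ((if w = u then (if x = c' then (1:ℝ) else 0) else 1) *
            (if (⨆ j, G j).Adj u w ∧ x = c' then 0 else 1))
          + (1 - p) * ∑ x ∈ L w, (if w = u then (0:ℝ) else 1)) * ((L w).card : ℝ)⁻¹))
          = (1 - p / (Λ:ℝ)) ^ (D * C) := by
        have h2 : ∀ w ∈ Finset.univ.erase u,
            ((p * ∑ x ∈ L w, ((if w = u then (if x = c' then (1:ℝ) else 0) else 1) *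
              (if (⨆ j, G j).Adj u w ∧ x = c' then 0 else 1))
            + (1 - p) * ∑ x ∈ L w, (if w = u then (0:ℝ) else 1)) * ((L w).card : ℝ)⁻¹)
            = if (⨆ j, G j).Adj u w ∧ c' ∈ L w then 1 - p / (Λ:ℝ) else 1 := by
          intro w hw
          have hwu : w ≠ u := Finset.ne_of_mem_erase hw
          rw [Finset.sum_congr rfl (fun x _ => by rw [if_neg hwu, one_mul]),
            Finset.sum_congr rfl (fun x _ => if_neg hwu)]
          exact factor_eval hΛ p (L w) (hsize w) ((⨆ j, G j).Adj u w) c'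
        rw [Finset.prod_congr rfl h2,
          Finset.prod_erase (f := fun w =>
              if (⨆ j, G j).Adj u w ∧ c' ∈ L w then 1 - p / (Λ:ℝ) else 1)
            Finset.univ (if_neg (fun h => (⨆ j, G j).irrefl h.1)),
          prod_ite_pow, union_colorDeg G S L hsupp hnd hcount hdeg u c' hc']
      rw [hrest]
    have hterm : ∀ u ∈ ((G i).neighborFinset v).filter fun u => c ∈ L u,
        expVal L p (fun A ψ =>
          ((∏ w : V, if w ∈ A then (1:ℝ) else (if w = u then 0 else 1))
          - ∑ c' ∈ L u, ∏ w : V,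
              if w ∈ A then (if w = u then (if ψ w = c' then (1:ℝ) else 0) else 1) *
                  (if (⨆ j, G j).Adj u w ∧ ψ w = c' then 0 else 1)
                else (if w = u then 0 else 1)))
        = p - p * (1 - p / (Λ:ℝ)) ^ (D * C) := by
      intro u hu
      rw [expVal_sub, hP1 u, expVal_sum, Finset.sum_congr rfl (hP2 u hu),
        Finset.sum_const, hsize u, nsmul_eq_mul]
      field_simp
    rw [Finset.sum_congr rfl hterm, Finset.sum_const, hNcard, nsmul_eq_mul]
    ring
  -- Part K
  · intro i v hv c hc
    have hNcard : (((G i).neighborFinset v).filter fun u => c ∈ L u).card = D :=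
      hdeg i v hv c hc
    have hmemS : ∀ u ∈ ((G i).neighborFinset v).filter fun u => c ∈ L u, u ∈ S i :=
      fun u hu => (hsupp i v u ((SimpleGraph.mem_neighborFinset _ _ _).1
        (Finset.mem_filter.1 hu).1)).2
    have key : expVal L p (fun A ψ => ((((G i).neighborFinset v).filter fun u =>
          c ∈ L u ∧ u ∉ A ∧
            ¬∃ w, w ∈ A ∧ w ∉ S i ∧ ψ w = c ∧ (⨆ j, G j).Adj w u).card : ℝ))
        = expVal L p (fun A ψ => ∑ u ∈ ((G i).neighborFinset v).filter fun u => c ∈ L u,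
            ∏ w : V, if w ∈ A
              then (if w = u then (0:ℝ) else 1) *
                (if (w ∉ S i ∧ (⨆ j, G j).Adj w u) ∧ ψ w = c then 0 else 1)
              else 1) := by
      refine expVal_congr L p fun A ψ hψ => ?_
      have hfilter : (((G i).neighborFinset v).filter fun u =>
            c ∈ L u ∧ u ∉ A ∧ ¬∃ w, w ∈ A ∧ w ∉ S i ∧ ψ w = c ∧ (⨆ j, G j).Adj w u)
          = (((G i).neighborFinset v).filter fun u => c ∈ L u).filter
              (fun u => u ∉ A ∧
                ¬∃ w, w ∈ A ∧ w ∉ S i ∧ ψ w = c ∧ (⨆ j, G j).Adj w u) := by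
        rw [Finset.filter_filter]
      rw [hfilter, Finset.card_filter, Nat.cast_sum]
      refine Finset.sum_congr rfl fun u hu => ?_
      have huS : u ∈ S i := hmemS u hu
      rw [Nat.cast_ite, Nat.cast_one, Nat.cast_zero,
        ← ind_notmem_forall A u
          (fun w => (w ∉ S i ∧ (⨆ j, G j).Adj w u) ∧ ψ w = c)
          (fun h => h.1.1 huS)]
      refine if_congr ?_ rfl rfl
      constructor
      · rintro ⟨hA, hno⟩
        exact ⟨hA, fun w hw hq => hno ⟨w, hw, hq.1.1, hq.2, hq.1.2⟩⟩
      · rintro ⟨hA, hall⟩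
        exact ⟨hA, fun ⟨w, hw, hs, he, ha⟩ => hall w hw ⟨⟨hs, ha⟩, he⟩⟩
    rw [key, expVal_sum]
    have hterm : ∀ u ∈ ((G i).neighborFinset v).filter fun u => c ∈ L u,
        expVal L p (fun A ψ => ∏ w : V, if w ∈ A
            then (if w = u then (0:ℝ) else 1) *
              (if (w ∉ S i ∧ (⨆ j, G j).Adj w u) ∧ ψ w = c then 0 else 1)
            else 1)
        = (1 - p) * (1 - p / (Λ:ℝ)) ^ (D * (C - 1)) := by
      intro u hu
      have huS : u ∈ S i := hmemS u hu
      have hcL : c ∈ L u := (Finset.mem_filter.1 hu).2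
      refine ((expVal_master L p
        (fun w x => (if w = u then (0:ℝ) else 1) *
          (if (w ∉ S i ∧ (⨆ j, G j).Adj w u) ∧ x = c then 0 else 1))
        (fun _ _ => (1:ℝ))).trans ?_)
      rw [← Finset.mul_prod_erase Finset.univ _ (Finset.mem_univ u)]
      have hfu : (p * ∑ x ∈ L u, ((if u = u then (0:ℝ) else 1) *
            (if (u ∉ S i ∧ (⨆ j, G j).Adj u u) ∧ x = c then 0 else 1))
          + (1 - p) * ∑ x ∈ L u, (1:ℝ)) * ((L u).card : ℝ)⁻¹ = 1 - p := by
        rw [Finset.sum_congr rfl (fun x _ => by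
            rw [if_pos (show u = u from rfl), zero_mul]),
          Finset.sum_const_zero, Finset.sum_const, nsmul_eq_mul, mul_one, hsize u]
        field_simp
        ring
      rw [hfu]
      have hrest : (∏ w ∈ Finset.univ.erase u,
          ((p * ∑ x ∈ L w, ((if w = u then (0:ℝ) else 1) *
            (if (w ∉ S i ∧ (⨆ j, G j).Adj w u) ∧ x = c then 0 else 1))
          + (1 - p) * ∑ x ∈ L w, (1:ℝ)) * ((L w).card : ℝ)⁻¹))
          = (1 - p / (Λ:ℝ)) ^ (D * (C - 1)) := by
        have h2 : ∀ w ∈ Finset.univ.erase u,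
            ((p * ∑ x ∈ L w, ((if w = u then (0:ℝ) else 1) *
              (if (w ∉ S i ∧ (⨆ j, G j).Adj w u) ∧ x = c then 0 else 1))
            + (1 - p) * ∑ x ∈ L w, (1:ℝ)) * ((L w).card : ℝ)⁻¹)
            = if (w ∉ S i ∧ (⨆ j, G j).Adj w u) ∧ c ∈ L w then 1 - p / (Λ:ℝ) else 1 := by
          intro w hw
          have hwu : w ≠ u := Finset.ne_of_mem_erase hw
          rw [Finset.sum_congr rfl (fun x _ => by rw [if_neg hwu, one_mul])]
          exact factor_eval hΛ p (L w) (hsize w) (w ∉ S i ∧ (⨆ j, G j).Adj w u) c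
        rw [Finset.prod_congr rfl h2,
          Finset.prod_erase (f := fun w =>
              if (w ∉ S i ∧ (⨆ j, G j).Adj w u) ∧ c ∈ L w then 1 - p / (Λ:ℝ) else 1)
            Finset.univ (if_neg (fun h => h.1.1 huS)),
          prod_ite_pow]
        have hcnt : (Finset.univ.filter fun w =>
            (w ∉ S i ∧ (⨆ j, G j).Adj w u) ∧ c ∈ L w).card = D * (C - 1) := by
          rw [show (Finset.univ.filter fun w => (w ∉ S i ∧ (⨆ j, G j).Adj w u) ∧ c ∈ L w)
              = Finset.univ.filter fun w =>
                ((⨆ j, G j).Adj u w ∧ c ∈ L w) ∧ w ∉ S i from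
            Finset.filter_congr fun w _ => by
              rw [SimpleGraph.adj_comm]
              tauto]
          exact union_colorDeg_out hC G S L hsupp hnd hcount hdeg i u huS c hcL
        rw [hcnt]
      rw [hrest]
    rw [Finset.sum_congr rfl hterm, Finset.sum_const, hNcard, nsmul_eq_mul]
    ring
end

section
/- Let C, D be positive integers and let G₁, …, G_m be nearly disjoint graphs of maximum degree at most D such that each vertex v ∈ ⋃_{i=1}^m V(G_i) is contained in at most C of the graphs G₁, …, G_m. Then in the graph G := ⋃_{i=1}^m G_i, every two distinct vertices have at most D + C² common neighbors, and G has maximum degree at most CD. -/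
open Finset

/-- If `G₁, …, G_m` are nearly disjoint graphs (with vertex sets `S i`) of maximum degree
at most `D` such that each vertex lies in at most `C` of them, then in `G = ⋃ᵢ Gᵢ` every
two distinct vertices have at most `D + C²` common neighbors, and `Δ(G) ≤ CD`. -/
theorem common_neighbors_and_degree_bound (C D : ℕ) (hC : 0 < C) (hD : 0 < D)
    (V : Type) [Fintype V] [DecidableEq V] (m : ℕ) (G : Fin m → SimpleGraph V)
    [∀ i, DecidableRel (G i).Adj] (S : Fin m → Finset V)
    (hsupp : ∀ i u v, (G i).Adj u v → u ∈ S i ∧ v ∈ S i)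
    (hnd : ∀ i j, i ≠ j → (S i ∩ S j).card ≤ 1)
    (hdeg : ∀ i v, (G i).degree v ≤ D)
    (hcount : ∀ v, (univ.filter fun i => v ∈ S i).card ≤ C) :
    (∀ u v : V, u ≠ v →
      (univ.filter fun w => (∃ i, (G i).Adj u w) ∧ ∃ i, (G i).Adj v w).card ≤ D + C ^ 2) ∧
    (∀ v : V, (univ.filter fun w => ∃ i, (G i).Adj v w).card ≤ C * D) := by
  classical
  constructor
  · intro u v huv
    set T1 : Finset V := univ.filter fun w => ∃ i, (G i).Adj u w ∧ (G i).Adj v w with hT1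
    set T2 : Finset V :=
      univ.filter fun w => ∃ i j, i ≠ j ∧ (G i).Adj u w ∧ (G j).Adj v w with hT2
    have hsub : (univ.filter fun w => (∃ i, (G i).Adj u w) ∧ ∃ i, (G i).Adj v w)
        ⊆ T1 ∪ T2 := by
      intro w hw
      simp only [mem_filter, mem_univ, true_and] at hw
      obtain ⟨⟨i, hi⟩, ⟨j, hj⟩⟩ := hw
      by_cases h : i = j
      · subst h
        exact mem_union_left _ (by
          simp only [hT1, mem_filter, mem_univ, true_and]; exact ⟨i, hi, hj⟩)
      · exact mem_union_right _ (by
          simp only [hT2, mem_filter, mem_univ, true_and]; exact ⟨i, j, h, hi, hj⟩)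
    have h1 : T1.card ≤ D := by
      rcases T1.eq_empty_or_nonempty with he | ⟨w0, hw0⟩
      · simp [he]
      · simp only [hT1, mem_filter, mem_univ, true_and] at hw0
        obtain ⟨i0, hu0, hv0⟩ := hw0
        have hsubn : T1 ⊆ (G i0).neighborFinset u := by
          intro w hw
          simp only [hT1, mem_filter, mem_univ, true_and] at hw
          obtain ⟨i, hui, hvi⟩ := hw
          have hieq : i = i0 := by
            by_contra hne
            have hcard := hnd i i0 hne
            have hsub2 : ({u, v} : Finset V) ⊆ S i ∩ S i0 := by
              intro x hx
              simp only [mem_insert, mem_singleton] at hx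
              rcases hx with rfl | rfl
              · exact mem_inter.mpr ⟨(hsupp i x w hui).1, (hsupp i0 x w0 hu0).1⟩
              · exact mem_inter.mpr ⟨(hsupp i x w hvi).1, (hsupp i0 x w0 hv0).1⟩
            have h2 : ({u, v} : Finset V).card = 2 := by
              rw [card_insert_of_notMem (by simpa using huv), card_singleton]
            have := card_le_card hsub2
            omega
          exact (SimpleGraph.mem_neighborFinset _ _ _).mpr (hieq ▸ hui)
        calc T1.card ≤ ((G i0).neighborFinset u).card := card_le_card hsubn
          _ = (G i0).degree u := by rw [SimpleGraph.card_neighborFinset_eq_degree]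
          _ ≤ D := hdeg i0 u
    have h2 : T2.card ≤ C ^ 2 := by
      set P : Finset (Fin m × Fin m) :=
        (univ.filter fun i => u ∈ S i) ×ˢ (univ.filter fun j => v ∈ S j) with hP
      have hsub2 : T2 ⊆ P.biUnion fun p =>
          if p.1 ≠ p.2 then S p.1 ∩ S p.2 else ∅ := by
        intro w hw
        simp only [hT2, mem_filter, mem_univ, true_and] at hw
        obtain ⟨i, j, hij, hui, hvj⟩ := hw
        refine mem_biUnion.mpr ⟨(i, j), ?_, ?_⟩
        · simp only [hP, mem_product, mem_filter, mem_univ, true_and]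
          exact ⟨(hsupp i u w hui).1, (hsupp j v w hvj).1⟩
        · simp only [hij, if_pos, ne_eq, not_false_iff]
          exact mem_inter.mpr ⟨(hsupp i u w hui).2, (hsupp j v w hvj).2⟩
      calc T2.card ≤ ∑ p ∈ P, (if p.1 ≠ p.2 then S p.1 ∩ S p.2 else ∅).card :=
            le_trans (card_le_card hsub2) (card_biUnion_le)
        _ ≤ ∑ _p ∈ P, 1 := by
            refine Finset.sum_le_sum fun p _ => ?_
            by_cases h : p.1 = p.2
            · simp [h]
            · simpa [h] using hnd p.1 p.2 h
        _ = P.card := by simp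
        _ ≤ C * C := by
            rw [hP, card_product]
            exact Nat.mul_le_mul (hcount u) (hcount v)
        _ = C ^ 2 := (sq C).symm
    calc (univ.filter fun w => (∃ i, (G i).Adj u w) ∧ ∃ i, (G i).Adj v w).card
        ≤ (T1 ∪ T2).card := card_le_card hsub
      _ ≤ T1.card + T2.card := card_union_le _ _
      _ ≤ D + C ^ 2 := Nat.add_le_add h1 h2
  · intro v
    have hsub : (univ.filter fun w => ∃ i, (G i).Adj v w)
        ⊆ (univ.filter fun i => v ∈ S i).biUnion fun i => (G i).neighborFinset v := by
      intro w hw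
      simp only [mem_filter, mem_univ, true_and] at hw
      obtain ⟨i, hi⟩ := hw
      refine mem_biUnion.mpr ⟨i, ?_, (SimpleGraph.mem_neighborFinset _ _ _).mpr hi⟩
      simp only [mem_filter, mem_univ, true_and]
      exact (hsupp i v w hi).1
    calc (univ.filter fun w => ∃ i, (G i).Adj v w).card
        ≤ ∑ i ∈ univ.filter fun i => v ∈ S i, ((G i).neighborFinset v).card :=
          le_trans (card_le_card hsub) card_biUnion_le
      _ ≤ ∑ _i ∈ univ.filter fun i => v ∈ S i, D := by
          refine Finset.sum_le_sum fun i _ => ?_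
          rw [SimpleGraph.card_neighborFinset_eq_degree]; exact hdeg i v
      _ = (univ.filter fun i => v ∈ S i).card * D := by rw [Finset.sum_const, smul_eq_mul]
      _ ≤ C * D := Nat.mul_le_mul_right D (hcount v)
end
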